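/- arXiv:2206.06312 — 8 statements merged into one kernel-verified Lean document; each statement's English description precedes it below -/
import Mathlib

section
/- For every positive integer d, the polynomial H_d(x1,...,x5) = h(x1^d, ..., x5^d), where h is the Horn polynomial, is not a sum of squares of real polynomials. -/
open MvPolynomial

/-- The Horn polynomial as a multivariate polynomial over ℝ. -/
noncomputable def hornPoly : MvPolynomial (Fin 5) ℝ :=
  (X 0 + X 1 + X 2 + X 3 + X 4) ^ 2
    - 4 * (X 0 * X 1 + X 1 * X 2 + X 2 * X 3 + X 3 * X 4 + X 4 * X 0)

namespace HornSOS

open Polynomial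
open scoped nonZeroDivisors

noncomputable section



abbrev R2 : Type := MvPolynomial (Fin 2) ℝ
abbrev RX : Type := Polynomial R2

def ad (d : ℕ) : R2 := X 0 ^ d + X 1 ^ d
def Qd (d : ℕ) : RX := Polynomial.X ^ d - Polynomial.C (ad d)

/-- A square dividing `X^d + 1` over `ℝ` must be a unit. -/
lemma unit_of_sq_dvd {d : ℕ} (hd : 0 < d) (w : Polynomial ℝ)
    (h : w ^ 2 ∣ (Polynomial.X ^ d + 1 : Polynomial ℝ)) : IsUnit w := by
  by_contra hw
  have hX1 : (Polynomial.X ^ d + 1 : Polynomial ℝ) ≠ 0 := by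
    have : (Polynomial.X ^ d + Polynomial.C (1:ℝ)).Monic := monic_X_pow_add_C _ hd.ne'
    simpa using this.ne_zero
  have hw0 : w ≠ 0 := by
    rintro rfl
    rw [zero_pow two_ne_zero, zero_dvd_iff] at h
    exact hX1 h
  have hnd : 0 < w.natDegree := by
    rcases Nat.eq_zero_or_pos w.natDegree with h0 | h0
    · exact absurd (Polynomial.isUnit_iff_degree_eq_zero.mpr
        (by rw [Polynomial.degree_eq_natDegree hw0, h0]; rfl)) hw
    · exact h0
  set W := w.map (algebraMap ℝ ℂ) with hWdef
  have hWdeg : 0 < W.degree := by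
    rw [hWdef, Polynomial.degree_map_eq_of_injective (algebraMap ℝ ℂ).injective]
    exact Polynomial.natDegree_pos_iff_degree_pos.mp hnd
  obtain ⟨z, hz⟩ := Complex.exists_root hWdeg
  have hdvd2 : (Polynomial.X - Polynomial.C z) ^ 2 ∣ (Polynomial.X ^ d + 1 : Polynomial ℂ) := by
    have h1 : (Polynomial.X - Polynomial.C z) ∣ W := Polynomial.dvd_iff_isRoot.mpr hz
    have h2 : W ^ 2 ∣ Polynomial.map (algebraMap ℝ ℂ) (Polynomial.X ^ d + 1) := by
      rw [← Polynomial.map_pow]; exact Polynomial.map_dvd _ h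
    rw [Polynomial.map_add, Polynomial.map_pow, Polynomial.map_X, Polynomial.map_one] at h2
    exact dvd_trans (pow_dvd_pow_of_dvd h1 2) h2
  obtain ⟨gq, hgq⟩ := hdvd2
  have hroot : z ^ d + 1 = 0 := by
    have := congrArg (Polynomial.eval z) hgq
    simpa [sub_self] using this
  have hder : (d : ℂ) * z ^ (d - 1) = 0 := by
    have := congrArg (fun p => Polynomial.eval z (Polynomial.derivative p)) hgq
    simpa [Polynomial.derivative_X_pow, Polynomial.derivative_mul, Polynomial.derivative_pow,
      sub_self] using this
  have hzd : z ^ (d - 1) = 0 := by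
    rcases mul_eq_zero.mp hder with h' | h'
    · exact absurd h' (by exact_mod_cast hd.ne')
    · exact h'
  rcases Nat.eq_or_lt_of_le hd with h1 | h1
  · rw [← h1] at hzd; simpa using hzd
  · have hz0 : z = 0 := by
      have h2 : d - 1 ≠ 0 := by omega
      exact pow_eq_zero_iff h2 |>.mp hzd
    rw [hz0, zero_pow hd.ne'] at hroot
    simpa using hroot

lemma exists_prime_once {d : ℕ} (hd : 0 < d) :
    ∃ π : R2, Prime π ∧ π ∣ ad d ∧ ¬ π ^ 2 ∣ ad d := by
  by_contra hcon
  push_neg at hcon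
  set Φ : R2 →ₐ[ℝ] Polynomial ℝ := MvPolynomial.aeval ![Polynomial.X, 1] with hΦ
  have hΦa : Φ (ad d) = Polynomial.X ^ d + 1 := by
    simp [ad, hΦ]
  have hX1 : (Polynomial.X ^ d + 1 : Polynomial ℝ) ≠ 0 := by
    have : (Polynomial.X ^ d + Polynomial.C (1:ℝ)).Monic := monic_X_pow_add_C _ hd.ne'
    simpa using this.ne_zero
  have ha0 : ad d ≠ 0 := by
    intro h0
    rw [h0, map_zero] at hΦa
    exact hX1 hΦa.symm
  obtain ⟨f, hfp, hfa⟩ := UniqueFactorizationMonoid.exists_prime_factors (ad d) ha0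
  obtain ⟨u, hu⟩ := hfa
  have hdvdprod : f.prod ∣ ad d := ⟨u, hu.symm⟩
  have hunit : ∀ b ∈ f, IsUnit (Φ b) := by
    intro b hb
    have hb2 : b ^ 2 ∣ ad d := hcon b (hfp b hb) (dvd_trans (Multiset.dvd_prod hb) hdvdprod)
    have : (Φ b) ^ 2 ∣ Polynomial.X ^ d + 1 := by
      have h' := map_dvd Φ hb2; rwa [map_pow, hΦa] at h'
    exact unit_of_sq_dvd hd _ this
  have hprodunit : ∀ (s : Multiset R2), (∀ b ∈ s, IsUnit (Φ b)) → IsUnit (Φ s.prod) := by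
    intro s
    refine Multiset.induction_on s (by simp) ?_
    intro b t ih hmem
    rw [Multiset.prod_cons, map_mul]
    exact (hmem b (Multiset.mem_cons_self _ _)).mul (ih fun c hc => hmem c (Multiset.mem_cons_of_mem hc))
  have hau : IsUnit (Φ (ad d)) := by
    rw [← hu, map_mul]
    exact (hprodunit f hunit).mul ((u.isUnit).map Φ)
  rw [hΦa] at hau
  have hdeg : Polynomial.degree (Polynomial.X ^ d + 1 : Polynomial ℝ) = d := by
    simpa using Polynomial.degree_X_pow_add_C hd (1:ℝ)
  rw [Polynomial.isUnit_iff_degree_eq_zero, hdeg] at hau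
  exact hd.ne' (by exact_mod_cast hau)

lemma Qd_monic {d : ℕ} (hd : 0 < d) : (Qd d).Monic :=
  Polynomial.monic_X_pow_sub_C _ hd.ne'

lemma Qd_irreducible {d : ℕ} (hd : 0 < d) : Irreducible (Qd d) := by
  obtain ⟨π, hπ, hπa, hπ2⟩ := exists_prime_once hd
  have hmono := Qd_monic hd
  have hnd : (Qd d).natDegree = d := Polynomial.natDegree_X_pow_sub_C
  have hc0 : (Qd d).coeff 0 = - ad d := by
    rw [Qd, Polynomial.coeff_sub, Polynomial.coeff_X_pow, Polynomial.coeff_C]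
    simp [hd.ne]
  have heis : (Qd d).IsEisensteinAt (Ideal.span {π}) := by
    constructor
    · rw [hmono.leadingCoeff]
      intro h1
      exact hπ.not_unit (isUnit_of_dvd_one (Ideal.mem_span_singleton.mp h1))
    · intro n hn
      rw [hnd] at hn
      rcases eq_or_ne n 0 with rfl | hne
      · rw [hc0]
        exact neg_mem (Ideal.mem_span_singleton.mpr hπa)
      · rw [Qd, Polynomial.coeff_sub, Polynomial.coeff_X_pow, Polynomial.coeff_C]
        simp only [if_neg (by omega : ¬ n = d), if_neg hne, sub_zero]
        exact Ideal.zero_mem _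
    · rw [hc0, Ideal.span_singleton_pow, Ideal.mem_span_singleton]
      intro hmem
      exact hπ2 ((dvd_neg).mp hmem)
  exact heis.irreducible ((Ideal.span_singleton_prime hπ.ne_zero).mpr hπ)
    hmono.isPrimitive (by rw [hnd]; exact hd)

lemma quadrant_zero (δ : R2) (h : ∀ y z : ℝ, 0 < y → 0 < z → MvPolynomial.eval ![y, z] δ = 0) :
    δ = 0 := by
  have step1 : ∀ (z : ℝ), 0 < z → ∀ y : ℝ, MvPolynomial.eval ![y, z] δ = 0 := by
    intro z hz
    have hcomp : ∀ y : ℝ, Polynomial.eval y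
        (MvPolynomial.aeval ![Polynomial.X, Polynomial.C z] δ) = MvPolynomial.eval ![y, z] δ := by
      intro y
      refine MvPolynomial.hom_eq_hom ((Polynomial.evalRingHom y).comp
        (MvPolynomial.aeval ![Polynomial.X, Polynomial.C z]).toRingHom)
        (MvPolynomial.eval ![y, z]) ?_ ?_ δ
      · ext r; simp
      · intro i; fin_cases i <;> simp
    have h0 : MvPolynomial.aeval ![Polynomial.X, Polynomial.C z] δ = 0 := by
      apply Polynomial.eq_zero_of_infinite_isRoot
      apply Set.Infinite.mono ?_ (Set.Ioi_infinite (0:ℝ))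
      intro y hy
      simp only [Set.mem_setOf_eq, Polynomial.IsRoot]
      rw [hcomp y]
      exact h y z hy hz
    intro y
    rw [← hcomp y, h0, Polynomial.eval_zero]
  have step2 : ∀ y z : ℝ, MvPolynomial.eval ![y, z] δ = 0 := by
    intro y z
    have hcomp : ∀ w : ℝ, Polynomial.eval w
        (MvPolynomial.aeval ![Polynomial.C y, Polynomial.X] δ) = MvPolynomial.eval ![y, w] δ := by
      intro w
      refine MvPolynomial.hom_eq_hom ((Polynomial.evalRingHom w).comp
        (MvPolynomial.aeval ![Polynomial.C y, Polynomial.X]).toRingHom)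
        (MvPolynomial.eval ![y, w]) ?_ ?_ δ
      · ext r; simp
      · intro i; fin_cases i <;> simp
    have h0 : MvPolynomial.aeval ![Polynomial.C y, Polynomial.X] δ = 0 := by
      apply Polynomial.eq_zero_of_infinite_isRoot
      apply Set.Infinite.mono ?_ (Set.Ioi_infinite (0:ℝ))
      intro w hw
      simp only [Set.mem_setOf_eq, Polynomial.IsRoot]
      rw [hcomp w]
      exact step1 w hw y
    rw [← hcomp z, h0, Polynomial.eval_zero]
  apply MvPolynomial.funext
  intro x
  have hx : x = ![x 0, x 1] := by
    funext i; fin_cases i <;> rfl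
  rw [map_zero, hx]
  exact step2 _ _

def cev (y z : ℝ) : R2 →+* ℝ := MvPolynomial.eval ![y, z]

def pev (s y z : ℝ) : RX →+* ℝ := Polynomial.eval₂RingHom (cev y z) s

lemma pev_Qd {d : ℕ} (s y z : ℝ) (hs : s ^ d = y ^ d + z ^ d) :
    pev s y z (Qd d) = 0 := by
  simp only [pev, Qd, map_sub, map_pow, Polynomial.coe_eval₂RingHom, Polynomial.eval₂_X,
    Polynomial.eval₂_C]
  simp only [cev, ad, map_add, map_pow, MvPolynomial.eval_X]
  simp [hs]

lemma key_dvd {d : ℕ} (hd : 0 < d) (f : RX)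
    (hf : ∀ s y z : ℝ, 0 < y → 0 < z → s ^ d = y ^ d + z ^ d → pev s y z f = 0) :
    Qd d ∣ f := by
  have hQm := Qd_monic hd
  set r := f %ₘ Qd d with hr
  have hfr : f = Qd d * (f /ₘ Qd d) + r := by
    conv_lhs => rw [← Polynomial.modByMonic_add_div f (Qd d)]
    ring
  have hrev : ∀ s y z : ℝ, 0 < y → 0 < z → s ^ d = y ^ d + z ^ d → pev s y z r = 0 := by
    intro s y z hy hz hs
    have h1 := hf s y z hy hz hs
    rw [hfr, map_add, map_mul, pev_Qd s y z hs, zero_mul, zero_add] at h1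
    exact h1
  by_cases hr0 : r = 0
  · refine ⟨f /ₘ Qd d, ?_⟩
    conv_lhs => rw [hfr, hr0]
    rw [add_zero]
  exfalso
  set K := FractionRing R2
  have hinj : Function.Injective (algebraMap R2 K) := IsFractionRing.injective R2 K
  have hmapinj : Function.Injective (Polynomial.map (algebraMap R2 K)) := fun p q hpq =>
    Polynomial.map_injective _ hinj hpq
  have hQKirr : Irreducible ((Qd d).map (algebraMap R2 K)) :=
    (hQm.irreducible_iff_irreducible_map_fraction_map (K := K)).mp (Qd_irreducible hd)
  have hnotdvd : ¬ (Qd d).map (algebraMap R2 K) ∣ r.map (algebraMap R2 K) := by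
    intro hdvd
    have hlt : (r.map (algebraMap R2 K)).degree < ((Qd d).map (algebraMap R2 K)).degree := by
      rw [r.degree_map_eq_of_injective hinj, (Qd d).degree_map_eq_of_injective hinj]
      exact Polynomial.degree_modByMonic_lt f hQm
    have h0 := Polynomial.eq_zero_of_dvd_of_degree_lt hdvd hlt
    apply hr0
    apply hmapinj
    rw [h0, Polynomial.map_zero]
  obtain ⟨u, v, huv⟩ := (hQKirr.coprime_iff_not_dvd).mpr hnotdvd
  obtain ⟨bu, hbu⟩ := IsLocalization.integerNormalization_map_to_map R2⁰ u
  obtain ⟨bv, hbv⟩ := IsLocalization.integerNormalization_map_to_map R2⁰ v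
  set nu := IsLocalization.integerNormalization R2⁰ u with hnu
  set nv := IsLocalization.integerNormalization R2⁰ v with hnv
  have hW : Polynomial.C (bv : R2) * nu * Qd d + Polynomial.C (bu : R2) * nv * r
      = Polynomial.C ((bu : R2) * (bv : R2)) := by
    apply hmapinj
    rw [Polynomial.map_add, Polynomial.map_mul, Polynomial.map_mul, Polynomial.map_mul,
      Polynomial.map_mul, Polynomial.map_C, Polynomial.map_C, Polynomial.map_C,
      hbu, hbv, ← algebraMap_smul K (bu : R2) u, ← algebraMap_smul K (bv : R2) v,
      Polynomial.smul_eq_C_mul, Polynomial.smul_eq_C_mul]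
    rw [map_mul, Polynomial.C_mul]
    linear_combination (Polynomial.C ((algebraMap R2 K) (bu : R2)) * Polynomial.C ((algebraMap R2 K) (bv : R2))) * huv
  have hval : ∀ y z : ℝ, 0 < y → 0 < z → MvPolynomial.eval ![y, z] ((bu : R2) * (bv : R2)) = 0 := by
    intro y z hy hz
    set s : ℝ := (y ^ d + z ^ d) ^ (d : ℝ)⁻¹ with hsdef
    have hs : s ^ d = y ^ d + z ^ d := by
      rw [hsdef]
      exact Real.rpow_inv_natCast_pow (by positivity) hd.ne'
    have h2 := congrArg (pev s y z) hW
    rw [map_add, map_mul, map_mul, map_mul, map_mul, pev_Qd s y z hs,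
      hrev s y z hy hz hs, mul_zero, mul_zero, add_zero] at h2
    have h3 : pev s y z (Polynomial.C ((bu : R2) * (bv : R2)))
        = MvPolynomial.eval ![y, z] ((bu : R2) * (bv : R2)) := by
      simp [pev, cev]
    rw [h3] at h2
    exact h2.symm
  have hbubv : (bu : R2) * (bv : R2) = 0 := quadrant_zero _ hval
  exact (mul_ne_zero (nonZeroDivisors.coe_ne_zero bu) (nonZeroDivisors.coe_ne_zero bv)) hbubv


def sig : Fin 5 → Fin 5 → RX :=
  ![![Polynomial.X, Polynomial.C (X 0), 0, 0, Polynomial.C (X 1)],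
    ![Polynomial.C (X 1), Polynomial.X, Polynomial.C (X 0), 0, 0],
    ![0, Polynomial.C (X 1), Polynomial.X, Polynomial.C (X 0), 0],
    ![0, 0, Polynomial.C (X 1), Polynomial.X, Polynomial.C (X 0)],
    ![Polynomial.C (X 0), 0, 0, Polynomial.C (X 1), Polynomial.X]]

def Uf : Fin 5 → Fin 5 → Polynomial ℝ :=
  ![![Polynomial.X, 0, 0, 0, 0], ![0, Polynomial.X, 0, 0, 0], ![0, 0, Polynomial.X, 0, 0],
    ![0, 0, 0, Polynomial.X, 0], ![0, 0, 0, 0, Polynomial.X]]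

def ψX : R2 →+* Polynomial ℝ := (MvPolynomial.aeval ![(0 : Polynomial ℝ), 0]).toRingHom
def πX : RX →+* Polynomial ℝ := Polynomial.eval₂RingHom ψX Polynomial.X
def ψY : R2 →+* Polynomial ℝ := (MvPolynomial.aeval ![Polynomial.X, (0 : Polynomial ℝ)]).toRingHom
def πY : RX →+* Polynomial ℝ := Polynomial.eval₂RingHom ψY 0

lemma slice_horn {d : ℕ} (hd : 0 < d) (k : Fin 5) :
    MvPolynomial.aeval (fun i => sig k i ^ d) hornPoly = Qd d ^ 2 := by
  have h0 : (0 : RX) ^ d = 0 := zero_pow hd.ne'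
  have hQ : Qd d = Polynomial.X ^ d - Polynomial.C (X 0) ^ d - Polynomial.C (X 1) ^ d := by
    rw [Qd, ad, map_add, map_pow, map_pow]; ring
  fin_cases k <;>
  · simp only [hornPoly, map_add, map_sub, map_mul, map_ofNat, map_pow, MvPolynomial.aeval_X,
      sig, Fin.zero_eta, Fin.mk_one, Fin.isValue, Matrix.cons_val_zero, Matrix.cons_val_one,
      Matrix.head_cons, Matrix.cons_val_two, Matrix.tail_cons, Matrix.cons_val_three,
      Matrix.cons_val_four, Matrix.head_fin_const, Fin.reduceFinMk]
    rw [hQ, h0]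
    ring

lemma compX (k : Fin 5) (p : MvPolynomial (Fin 5) ℝ) :
    πX (MvPolynomial.aeval (sig k) p) = MvPolynomial.aeval (Uf k) p := by
  refine MvPolynomial.hom_eq_hom (πX.comp (MvPolynomial.aeval (sig k)).toRingHom)
    ((MvPolynomial.aeval (Uf k)).toRingHom) ?_ ?_ p
  · ext r
    simp [πX, ψX]
  · intro i
    fin_cases k <;> fin_cases i <;>
      simp [πX, ψX, sig, Uf]

lemma compY (k : Fin 5) (p : MvPolynomial (Fin 5) ℝ) :
    πY (MvPolynomial.aeval (sig k) p) = MvPolynomial.aeval (Uf (k + 1)) p := by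
  refine MvPolynomial.hom_eq_hom (πY.comp (MvPolynomial.aeval (sig k)).toRingHom)
    ((MvPolynomial.aeval (Uf (k + 1))).toRingHom) ?_ ?_ p
  · ext r
    simp [πY, ψY]
  · intro i
    fin_cases k <;> fin_cases i <;>
      simp [πY, ψY, sig, Uf]

lemma Qd_eq {d : ℕ} : Qd d = Polynomial.X ^ d
    - (Polynomial.C ((X 0 : R2) ^ d) + Polynomial.C ((X 1 : R2) ^ d)) := by
  rw [Qd, ad, map_add]

lemma piX_Qd {d : ℕ} (hd : 0 < d) : πX (Qd d) = Polynomial.X ^ d := by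
  rw [Qd_eq]
  simp only [πX, Polynomial.coe_eval₂RingHom, Polynomial.eval₂_sub, Polynomial.eval₂_add,
    Polynomial.eval₂_C, Polynomial.eval₂_X_pow]
  simp [ψX, zero_pow hd.ne']

lemma piY_Qd {d : ℕ} (hd : 0 < d) : πY (Qd d) = -(Polynomial.X ^ d) := by
  rw [Qd_eq]
  simp only [πY, Polynomial.coe_eval₂RingHom, Polynomial.eval₂_sub, Polynomial.eval₂_add,
    Polynomial.eval₂_C, Polynomial.eval₂_X_pow]
  simp [ψY, zero_pow hd.ne']

lemma coeff0_eq (p : RX) : (πX p).coeff 0 = (πY p).coeff 0 := by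
  rw [Polynomial.coeff_zero_eq_eval_zero, Polynomial.coeff_zero_eq_eval_zero]
  have h : (Polynomial.evalRingHom (0:ℝ)).comp πX = (Polynomial.evalRingHom (0:ℝ)).comp πY := by
    apply Polynomial.ringHom_ext'
    · apply MvPolynomial.ringHom_ext
      · intro rr; simp [πX, πY, ψX, ψY]
      · intro i; fin_cases i <;> simp [πX, πY, ψX, ψY]
    · simp [πX, πY]
  exact RingHom.congr_fun h p


end
end HornSOS

open HornSOS

/-- For every positive integer `d`, the polynomial `h(x₁^d, …, x₅^d)` is not a sum of
squares of real polynomials. -/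
theorem horn_power_not_sos (d : ℕ) (hd : 0 < d) :
    ¬ ∃ (m : ℕ) (g : Fin m → MvPolynomial (Fin 5) ℝ),
        MvPolynomial.aeval (fun i => (X i : MvPolynomial (Fin 5) ℝ) ^ d) hornPoly
          = ∑ i, g i ^ 2 := by
  rintro ⟨m, g, hsum⟩
  have hTsum : ∀ k : Fin 5, (∑ j, (MvPolynomial.aeval (sig k) (g j)) ^ 2) = Qd d ^ 2 := by
    intro k
    have h1 := congrArg (MvPolynomial.aeval (sig k)) hsum
    rw [map_sum] at h1
    simp only [map_pow] at h1
    rw [← h1, MvPolynomial.comp_aeval_apply]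
    have hfun : (fun i => (MvPolynomial.aeval (sig k)) ((X i : MvPolynomial (Fin 5) ℝ) ^ d))
        = fun i => sig k i ^ d := by
      funext i
      simp only [map_pow, MvPolynomial.aeval_X]
    rw [hfun]
    exact slice_horn hd k
  have hdvd : ∀ (k : Fin 5) (j : Fin m), Qd d ∣ MvPolynomial.aeval (sig k) (g j) := by
    intro k j
    apply key_dvd hd
    intro s y z hy hz hs
    have h2 : ∑ j', (pev s y z (MvPolynomial.aeval (sig k) (g j'))) ^ 2 = 0 := by
      have h3 := congrArg (pev s y z) (hTsum k)
      rw [map_sum] at h3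
      simp only [map_pow] at h3
      rw [h3, pev_Qd s y z hs]
      ring
    have h4 := (Finset.sum_eq_zero_iff_of_nonneg (fun j' _ => sq_nonneg _)).mp h2 j
      (Finset.mem_univ j)
    exact pow_eq_zero_iff two_ne_zero |>.mp h4
  choose w hw using hdvd
  -- coefficient bookkeeping
  set β : Fin m → Fin 5 → ℝ := fun j i => (MvPolynomial.aeval (Uf i) (g j)).coeff d with hβ
  have hcoeffd : ∀ p : Polynomial ℝ, (Polynomial.X ^ d * p).coeff d = p.coeff 0 := by
    intro p
    have := Polynomial.coeff_X_pow_mul p d 0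
    simpa using this
  have hUX : ∀ (k : Fin 5) (j : Fin m),
      MvPolynomial.aeval (Uf k) (g j) = Polynomial.X ^ d * πX (w k j) := by
    intro k j
    rw [← compX, hw k j, map_mul, piX_Qd hd]
  have hstep : ∀ (j : Fin m) (k : Fin 5), β j (k + 1) = - β j k := by
    intro j k
    have h2 : MvPolynomial.aeval (Uf (k+1)) (g j) = -(Polynomial.X ^ d * πY (w k j)) := by
      rw [← compY, hw k j, map_mul, piY_Qd hd]
      ring
    rw [hβ]
    simp only
    rw [h2, hUX k j, Polynomial.coeff_neg, hcoeffd, hcoeffd, coeff0_eq]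
  have hzero : ∀ j, β j 0 = 0 := by
    intro j
    have e0 := hstep j 0
    have e1 := hstep j 1
    have e2 := hstep j 2
    have e3 := hstep j 3
    have e4 := hstep j 4
    have c0 : (0 : Fin 5) + 1 = 1 := by decide
    have c1 : (1 : Fin 5) + 1 = 2 := by decide
    have c2 : (2 : Fin 5) + 1 = 3 := by decide
    have c3 : (3 : Fin 5) + 1 = 4 := by decide
    have c4 : (4 : Fin 5) + 1 = 0 := by decide
    rw [c0] at e0; rw [c1] at e1; rw [c2] at e2; rw [c3] at e3; rw [c4] at e4
    linarith
  -- final contradiction via the univariate restriction at k = 0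
  have hU0horn : MvPolynomial.aeval (Uf 0)
      (MvPolynomial.aeval (fun i => (X i : MvPolynomial (Fin 5) ℝ) ^ d) hornPoly)
      = (Polynomial.X ^ d) ^ 2 := by
    rw [MvPolynomial.comp_aeval_apply]
    have hfun : (fun i => (MvPolynomial.aeval (Uf 0)) ((X i : MvPolynomial (Fin 5) ℝ) ^ d))
        = fun i => Uf 0 i ^ d := by
      funext i
      simp only [map_pow, MvPolynomial.aeval_X]
    rw [hfun]
    simp only [hornPoly, map_add, map_sub, map_mul, map_ofNat, map_pow, MvPolynomial.aeval_X,
      Uf, Fin.zero_eta, Fin.mk_one, Fin.isValue, Matrix.cons_val_zero, Matrix.cons_val_one,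
      Matrix.head_cons, Matrix.cons_val_two, Matrix.tail_cons, Matrix.cons_val_three,
      Matrix.cons_val_four, Matrix.head_fin_const, Fin.reduceFinMk]
    simp only [zero_pow hd.ne']
    ring
  have hsum0 : ∑ j, ((Polynomial.X : Polynomial ℝ) ^ d * πX (w 0 j)) ^ 2
      = ((Polynomial.X : Polynomial ℝ) ^ d) ^ 2 := by
    have h1 := congrArg (MvPolynomial.aeval (Uf 0)) hsum
    rw [map_sum] at h1
    simp only [map_pow] at h1
    rw [hU0horn] at h1
    calc ∑ j, ((Polynomial.X : Polynomial ℝ) ^ d * πX (w 0 j)) ^ 2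
        = ∑ j, ((MvPolynomial.aeval (Uf 0)) (g j)) ^ 2 :=
          Finset.sum_congr rfl fun j _ => by rw [hUX 0 j]
      _ = ((Polynomial.X : Polynomial ℝ) ^ d) ^ 2 := h1.symm
  have hfinal : ∑ j, (πX (w 0 j)) ^ 2 = 1 := by
    have hx : (((Polynomial.X : Polynomial ℝ) ^ d) ^ 2) ≠ 0 :=
      pow_ne_zero _ (pow_ne_zero _ Polynomial.X_ne_zero)
    apply mul_left_cancel₀ hx
    rw [mul_one, Finset.mul_sum]
    calc ∑ j, ((Polynomial.X : Polynomial ℝ) ^ d) ^ 2 * πX (w 0 j) ^ 2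
        = ∑ j, ((Polynomial.X : Polynomial ℝ) ^ d * πX (w 0 j)) ^ 2 :=
          Finset.sum_congr rfl fun j _ => by ring
      _ = ((Polynomial.X : Polynomial ℝ) ^ d) ^ 2 := hsum0
  have hev : ∀ j : Fin m, Polynomial.eval 0 (πX (w 0 j)) = 0 := by
    intro j
    rw [← Polynomial.coeff_zero_eq_eval_zero, ← hcoeffd, ← hUX 0 j]
    exact hzero j
  have := congrArg (Polynomial.eval 0) hfinal
  rw [Polynomial.eval_finset_sum] at this
  simp only [Polynomial.eval_pow, Polynomial.eval_one, hev] at this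
  simp at this
end

section
/- If a sum of squares of real polynomials g1^2 + ... + gm^2 equals the square q^2 of an irreducible real polynomial q whose real zero set is Zariski dense in its complex zero set, then every gi is divisible by q. -/
open MvPolynomial

private noncomputable def rePoly {σ : Type*} (w : MvPolynomial σ ℂ) : MvPolynomial σ ℝ :=
  ∑ s ∈ w.support, monomial s (w.coeff s).re

private lemma coeff_rePoly {σ : Type*} (w : MvPolynomial σ ℂ) (s : σ →₀ ℕ) :
    (rePoly w).coeff s = (w.coeff s).re := by
  classical
  rw [rePoly, MvPolynomial.coeff_sum]
  rw [Finset.sum_eq_single s]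
  · simp
  · intro b _ hb
    simp [MvPolynomial.coeff_monomial, hb]
  · intro hs
    simp [MvPolynomial.notMem_support_iff.mp hs]

private lemma map_dvd_descend {σ : Type*} (q h : MvPolynomial σ ℝ)
    (hd : MvPolynomial.map (algebraMap ℝ ℂ) q ∣ MvPolynomial.map (algebraMap ℝ ℂ) h) :
    q ∣ h := by
  classical
  obtain ⟨w, hw⟩ := hd
  refine ⟨rePoly w, ?_⟩
  apply MvPolynomial.ext
  intro s
  have h1 : (MvPolynomial.map (algebraMap ℝ ℂ) h).coeff s
      = (MvPolynomial.map (algebraMap ℝ ℂ) q * w).coeff s := by rw [hw]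
  rw [MvPolynomial.coeff_map, MvPolynomial.coeff_mul] at h1
  have h2 : (Complex.ofReal (h.coeff s)).re
      = (∑ x ∈ Finset.HasAntidiagonal.antidiagonal s,
          (MvPolynomial.map (algebraMap ℝ ℂ) q).coeff x.1 * w.coeff x.2).re := by
    rw [← h1]; rfl
  simp only [Complex.re_sum, MvPolynomial.coeff_map] at h2
  rw [MvPolynomial.coeff_mul]
  rw [Complex.ofReal_re] at h2
  rw [h2]
  refine Finset.sum_congr rfl fun x _ => ?_
  rw [coeff_rePoly]
  have : (algebraMap ℝ ℂ) (q.coeff x.1) = Complex.ofReal (q.coeff x.1) := rfl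
  rw [this, Complex.re_ofReal_mul]

private lemma eval_map_real {σ : Type*} (g : MvPolynomial σ ℝ) (x : σ → ℝ) :
    eval (fun i => (x i : ℂ)) (MvPolynomial.map (algebraMap ℝ ℂ) g)
      = (eval x g : ℂ) := by
  rw [MvPolynomial.eval_map]
  have := MvPolynomial.eval₂_comp_left (algebraMap ℝ ℂ) (RingHom.id ℝ) x g
  simpa [MvPolynomial.eval₂_id, Function.comp_def] using this.symm

/-- If a sum of squares of real polynomials equals `q ^ 2` for an irreducible real
polynomial `q` whose real zero set is Zariski dense in its complex zero set (i.e. every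
complex polynomial vanishing on the real zeros of `q` vanishes on all complex zeros of
`q`), then every summand is divisible by `q`. -/
theorem sos_eq_sq_irreducible_dvd
    (n : ℕ) (q : MvPolynomial (Fin n) ℝ) (hq : Irreducible q)
    (hdense : ∀ f : MvPolynomial (Fin n) ℂ,
      (∀ x : Fin n → ℝ, eval x q = 0 → eval (fun i => (x i : ℂ)) f = 0) →
      ∀ z : Fin n → ℂ, eval z (MvPolynomial.map (algebraMap ℝ ℂ) q) = 0 → eval z f = 0)
    (m : ℕ) (g : Fin m → MvPolynomial (Fin n) ℝ)
    (hsos : ∑ i, g i ^ 2 = q ^ 2) :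
    ∀ i, q ∣ g i := by
  classical
  intro i
  -- each g i vanishes on the real zeros of q
  have hvan : ∀ x : Fin n → ℝ, eval x q = 0 → eval x (g i) = 0 := by
    intro x hx
    have hsum : ∑ j, (eval x (g j)) ^ 2 = 0 := by
      have := congrArg (eval x) hsos
      simpa [map_sum, hx] using this
    have := (Finset.sum_eq_zero_iff_of_nonneg
      (fun j _ => sq_nonneg (eval x (g j)))).mp hsum i (Finset.mem_univ i)
    exact (pow_eq_zero_iff two_ne_zero).mp this
  -- so map g i vanishes on the complex zero locus of map q
  set Q := MvPolynomial.map (algebraMap ℝ ℂ) q with hQ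
  have hmem : MvPolynomial.map (algebraMap ℝ ℂ) (g i) ∈
      MvPolynomial.vanishingIdeal ℂ (MvPolynomial.zeroLocus ℂ (Ideal.span {Q})) := by
    rw [MvPolynomial.mem_vanishingIdeal_iff]
    intro z hz
    have hzQ : eval z Q = 0 :=
      hz Q (Ideal.subset_span (Set.mem_singleton _))
    refine hdense _ ?_ z hzQ
    intro x hx
    rw [eval_map_real, hvan x hx, Complex.ofReal_zero]
  rw [MvPolynomial.vanishingIdeal_zeroLocus_eq_radical, Ideal.mem_radical_iff] at hmem
  obtain ⟨k, hk⟩ := hmem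
  rw [Ideal.mem_span_singleton] at hk
  have hk' : Q ∣ MvPolynomial.map (algebraMap ℝ ℂ) ((g i) ^ k) := by
    rwa [map_pow]
  have : q ∣ (g i) ^ k := map_dvd_descend q _ hk'
  exact (hq.prime).dvd_of_dvd_pow this
end

section
/- Let H = R[[ε^Λ]] be the Hahn series field over a real closed field R and let f: Λ → R. Define L_f: H → H by L_f(∑ c_e ε^e) = ∑ f(e) c_e ε^e. If L_f is unital and 2-positive (preserves positive semidefiniteness of 2×2 symmetric matrices entrywise), then f(a)·f(−a) ≥ 1 for every a ∈ Λ; in particular f is nowhere zero and L_f is bijective. -/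
open HahnSeries Matrix

/-- The nonnegative elements of the real closed Hahn series field `ℝ[[ε^Γ]]`. -/
def HahnSeries.Nonneg {Γ : Type*} [AddCommGroup Γ] [LinearOrder Γ] [IsOrderedAddMonoid Γ]
    (x : HahnSeries Γ ℝ) : Prop :=
  x = 0 ∨ 0 < x.leadingCoeff

/-- For `f : Γ → ℝ`, the map `L_f : ℝ[[ε^Γ]] → ℝ[[ε^Γ]]`,
`∑ cₑ εᵉ ↦ ∑ f(e) cₑ εᵉ`. -/
def Lf {Γ : Type*} [AddCommGroup Γ] [LinearOrder Γ] [IsOrderedAddMonoid Γ] (f : Γ → ℝ)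
    (x : HahnSeries Γ ℝ) : HahnSeries Γ ℝ where
  coeff e := f e * x.coeff e
  isPWO_support' := x.isPWO_support.mono (by
    intro e he
    simp only [Function.mem_support] at he ⊢
    exact fun h => he (by rw [h, mul_zero]))

section Aux

variable {Γ : Type*} [AddCommGroup Γ] [LinearOrder Γ] [IsOrderedAddMonoid Γ]

lemma Lf_coeff (f : Γ → ℝ) (x : HahnSeries Γ ℝ) (e : Γ) :
    (Lf f x).coeff e = f e * x.coeff e := rfl

lemma Lf_single (f : Γ → ℝ) (b : Γ) (r : ℝ) :
    Lf f (single b r) = single b (f b * r) := by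
  ext e
  rw [Lf_coeff]
  by_cases h : e = b
  · subst h; simp
  · simp [coeff_single_of_ne h]

lemma sq_nonneg_hahn (x : HahnSeries Γ ℝ) : (x * x).Nonneg := by
  rcases eq_or_ne x 0 with rfl | h
  · left; simp
  · right
    rw [leadingCoeff_eq, order_mul h h, coeff_mul_order_add_order]
    exact mul_self_pos.mpr (leadingCoeff_ne_zero.mpr h)

lemma nonneg_single_iff {b : Γ} {r : ℝ} (h : (single b r : HahnSeries Γ ℝ).Nonneg) :
    0 ≤ r := by
  rcases h with h | h
  · rw [single_eq_zero_iff] at h; exact h.ge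
  · rw [leadingCoeff_of_single] at h; exact h.le

lemma single_add' (b : Γ) (r s : ℝ) :
    (single b (r + s) : HahnSeries Γ ℝ) = single b r + single b s := by
  ext e
  by_cases h : e = b
  · subst h; simp
  · simp [coeff_single_of_ne h]

lemma quad2 (A : Matrix (Fin 2) (Fin 2) (HahnSeries Γ ℝ)) (v : Fin 2 → HahnSeries Γ ℝ) :
    v ⬝ᵥ A.mulVec v =
      v 0 * (A 0 0 * v 0 + A 0 1 * v 1) + v 1 * (A 1 0 * v 0 + A 1 1 * v 1) := by
  simp [dotProduct, Matrix.mulVec, Fin.sum_univ_two]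

end Aux

/-- If `L_f` is unital and 2-positive (it preserves positive semidefiniteness of `2 × 2`
symmetric matrices over the Hahn series field), then `f(a) f(−a) ≥ 1` for all `a ∈ Γ`;
in particular `f` is nowhere zero and `L_f` is bijective. -/
theorem Lf_unital_twoPositive {Γ : Type*} [AddCommGroup Γ] [LinearOrder Γ] [IsOrderedAddMonoid Γ]
    (hdiv : ∀ (g : Γ) (k : ℕ), 0 < k → ∃ h : Γ, k • h = g)
    (f : Γ → ℝ) (hunital : Lf f 1 = 1)
    (h2pos : ∀ A : Matrix (Fin 2) (Fin 2) (HahnSeries Γ ℝ), A.IsSymm →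
      (∀ v : Fin 2 → HahnSeries Γ ℝ, (v ⬝ᵥ A.mulVec v).Nonneg) →
      ∀ v : Fin 2 → HahnSeries Γ ℝ, (v ⬝ᵥ (A.map (Lf f)).mulVec v).Nonneg) :
    (∀ a : Γ, 1 ≤ f a * f (-a)) ∧ (∀ a : Γ, f a ≠ 0) ∧ Function.Bijective (Lf f) := by
  have main : ∀ a : Γ, 1 ≤ f a * f (-a) := by
    intro a
    obtain ⟨h, hh⟩ := hdiv a 2 (by norm_num)
    have hha : h + h = a := by rw [← two_nsmul, hh]
    set A : Matrix (Fin 2) (Fin 2) (HahnSeries Γ ℝ) :=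
      Matrix.of ![![single (-a) 1, 1], ![1, single a 1]] with hA
    have hsymm : A.IsSymm := by
      ext i j
      fin_cases i <;> fin_cases j <;> rfl
    have hApos : ∀ v : Fin 2 → HahnSeries Γ ℝ, (v ⬝ᵥ A.mulVec v).Nonneg := by
      intro v
      have key : v ⬝ᵥ A.mulVec v =
          (v 0 * single (-h) 1 + v 1 * single h 1) *
            (v 0 * single (-h) 1 + v 1 * single h 1) := by
        rw [quad2]
        have e1 : (single (-h) 1 : HahnSeries Γ ℝ) * single (-h) 1 = single (-a) 1 := by
          rw [single_mul_single, mul_one]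
          congr 1
          rw [← hha, neg_add]
        have e2 : (single (-h) 1 : HahnSeries Γ ℝ) * single h 1 = 1 := by
          rw [single_mul_single, mul_one, neg_add_cancel, single_zero_one]
        have e3 : (single h 1 : HahnSeries Γ ℝ) * single h 1 = single a 1 := by
          rw [single_mul_single, mul_one, hha]
        have hA00 : A 0 0 = single (-a) 1 := rfl
        have hA01 : A 0 1 = 1 := rfl
        have hA10 : A 1 0 = 1 := rfl
        have hA11 : A 1 1 = single a 1 := rfl
        rw [hA00, hA01, hA10, hA11, ← e1, ← e3, ← e2]
        ring
      rw [key]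
      exact sq_nonneg_hahn _
    have hB := h2pos A hsymm hApos
    have hB00 : (A.map (Lf f)) 0 0 = single (-a) (f (-a)) := by
      show Lf f (single (-a) 1) = _
      rw [Lf_single, mul_one]
    have hB01 : (A.map (Lf f)) 0 1 = 1 := hunital
    have hB10 : (A.map (Lf f)) 1 0 = 1 := hunital
    have hB11 : (A.map (Lf f)) 1 1 = single a (f a) := by
      show Lf f (single a 1) = _
      rw [Lf_single, mul_one]
    -- f (-a) ≥ 0
    have hc0 : 0 ≤ f (-a) := by
      have E1 : (![1, 0] : Fin 2 → HahnSeries Γ ℝ) ⬝ᵥ (A.map (Lf f)).mulVec ![1, 0] =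
          single (-a) (f (-a)) := by
        rw [quad2, hB00, hB01, hB10, hB11]
        show (1 : HahnSeries Γ ℝ) * (single (-a) (f (-a)) * 1 + 1 * 0)
          + 0 * (1 * 1 + single a (f a) * 0) = _
        simp
      have h1 := hB ![1, 0]
      rw [E1] at h1
      exact nonneg_single_iff h1
    -- f (-a) ≠ 0
    have hcne : f (-a) ≠ 0 := by
      intro hc
      set t : HahnSeries Γ ℝ := single 0 (-1) + single a (-(f a)/2) with ht
      have E2 : (![t, 1] : Fin 2 → HahnSeries Γ ℝ) ⬝ᵥ (A.map (Lf f)).mulVec ![t, 1] =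
          single (0:Γ) (-2) := by
        rw [quad2, hB00, hB01, hB10, hB11]
        show t * (single (-a) (f (-a)) * t + 1 * 1)
          + 1 * (1 * t + single a (f a) * 1) = _
        rw [hc, single_eq_zero]
        simp only [zero_mul, zero_add, mul_one, one_mul]
        have hs : (single a (-(f a)/2) : HahnSeries Γ ℝ) + single a (-(f a)/2)
            + single a (f a) = 0 := by
          rw [← single_add', ← single_add']
          norm_num
        have hs2 : (single (0:Γ) (-1:ℝ) : HahnSeries Γ ℝ) + single 0 (-1) =
            single (0:Γ) (-2) := by
          rw [← single_add']; norm_num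
        calc t + (t + single a (f a))
            = (single (0:Γ) (-1:ℝ) + single 0 (-1)) +
              (single a (-(f a)/2) + single a (-(f a)/2) + single a (f a)) := by
              rw [ht]; abel
          _ = single (0:Γ) (-2) := by rw [hs, hs2, add_zero]
      have h2 := hB ![t, 1]
      rw [E2] at h2
      have := nonneg_single_iff h2
      linarith
    have hc : 0 < f (-a) := lt_of_le_of_ne hc0 (Ne.symm hcne)
    -- main inequality
    set w : HahnSeries Γ ℝ := single (-a) (-(f (-a))) with hw
    have E3 : (![1, w] : Fin 2 → HahnSeries Γ ℝ) ⬝ᵥ (A.map (Lf f)).mulVec ![1, w] =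
        single (-a) (f (-a) * (f (-a) * f a - 1)) := by
      rw [quad2, hB00, hB01, hB10, hB11]
      show (1 : HahnSeries Γ ℝ) * (single (-a) (f (-a)) * 1 + 1 * w)
        + w * (1 * 1 + single a (f a) * w) = _
      rw [one_mul, mul_one, one_mul, one_mul, hw]
      rw [mul_add, mul_one, single_mul_single, single_mul_single, add_neg_cancel, add_zero]
      rw [← single_add', ← single_add', ← single_add']
      congr 1
      ring
    have h3 := hB ![1, w]
    rw [E3] at h3
    have hkey := nonneg_single_iff h3
    nlinarith [hkey, hc]
  refine ⟨main, ?_, ?_⟩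
  · intro a ha
    have := main a
    rw [ha, zero_mul] at this
    linarith
  · have hne : ∀ a : Γ, f a ≠ 0 := by
      intro a ha
      have := main a
      rw [ha, zero_mul] at this
      linarith
    refine Function.bijective_iff_has_inverse.mpr ⟨Lf (fun e => (f e)⁻¹), ?_, ?_⟩
    · intro x
      ext e
      rw [Lf_coeff, Lf_coeff, ← mul_assoc, inv_mul_cancel₀ (hne e), one_mul]
    · intro x
      ext e
      rw [Lf_coeff, Lf_coeff, ← mul_assoc, mul_inv_cancel₀ (hne e), one_mul]
end

section
/- Let μ be the Lebesgue measure restricted to a compact interval [a,b] with a < b, and define T on the group ring ℝ[ℝ] (spanned by formal symbols ε^a, a ∈ ℝ) by T(∑ c_i ε^{a_i}) = ∫_a^b ∑ c_i exp(a_i x) dx. Then T(g^2) > 0 for every nonzero g ∈ ℝ[ℝ]. Consequently the function f(a) = T(ε^a) = ∫_a^b exp(a x) dx is positive definite on ℝ. -/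
open MeasureTheory intervalIntegral Set

noncomputable def expChar (t : ℝ) : Multiplicative ℝ →* ℝ where
  toFun e := Real.exp (e.toAdd * t)
  map_one' := by simp
  map_mul' e f := by
    simp [add_mul, Real.exp_add]

noncomputable def psiFun (g : AddMonoidAlgebra ℝ ℝ) (t : ℝ) : ℝ :=
  Finsupp.sum g.coeff fun e r => r * Real.exp (e * t)

lemma psiFun_eq_lift (g : AddMonoidAlgebra ℝ ℝ) (t : ℝ) :
    psiFun g t = AddMonoidAlgebra.lift ℝ ℝ ℝ (expChar t) g := by
  rw [AddMonoidAlgebra.lift_apply]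
  simp [psiFun, expChar, smul_eq_mul]

lemma psiFun_mul (g h : AddMonoidAlgebra ℝ ℝ) (t : ℝ) :
    psiFun (g * h) t = psiFun g t * psiFun h t := by
  simp [psiFun_eq_lift, map_mul]

lemma psiFun_sum_support (g : AddMonoidAlgebra ℝ ℝ) (t : ℝ) :
    psiFun g t = ∑ e ∈ g.coeff.support, g.coeff e * Real.exp (e * t) := rfl

lemma psiFun_continuous (g : AddMonoidAlgebra ℝ ℝ) : Continuous (psiFun g) := by
  have : (psiFun g) = fun t => ∑ e ∈ g.coeff.support, g.coeff e * Real.exp (e * t) := rfl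
  rw [this]
  exact continuous_finset_sum _ fun e _ =>
    continuous_const.mul (Real.continuous_exp.comp (continuous_const.mul continuous_id))

lemma psiFun_analytic (g : AddMonoidAlgebra ℝ ℝ) :
    AnalyticOnNhd ℝ (psiFun g) Set.univ := by
  have : (psiFun g) = fun t => ∑ e ∈ g.coeff.support, g.coeff e * Real.exp (e * t) := rfl
  rw [this]
  apply Finset.analyticOnNhd_fun_sum
  intro e _
  exact analyticOnNhd_const.mul
    (analyticOnNhd_rexp.comp (analyticOnNhd_const.mul analyticOnNhd_id)
      (Set.mapsTo_univ _ _))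

noncomputable def expChar' (e : ℝ) : Multiplicative ℝ →* ℝ where
  toFun t := Real.exp (e * t.toAdd)
  map_one' := by simp
  map_mul' s t := by
    simp [mul_add, Real.exp_add]

lemma expChar'_injective : Function.Injective expChar' := by
  intro e e' h
  have := congrFun (congrArg (fun f : Multiplicative ℝ →* ℝ => (f : Multiplicative ℝ → ℝ))
    h) (Multiplicative.ofAdd (1 : ℝ))
  have h1 : Real.exp (e * 1) = Real.exp (e' * 1) := this
  have := Real.exp_injective h1
  simpa using this

lemma psiFun_eq_zero (g : AddMonoidAlgebra ℝ ℝ) (h : ∀ t, psiFun g t = 0) : g = 0 := by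
  have hli : LinearIndependent ℝ (fun e : ℝ => ((expChar' e : Multiplicative ℝ →* ℝ) :
      Multiplicative ℝ → ℝ)) :=
    (linearIndependent_monoidHom (Multiplicative ℝ) ℝ).comp _ expChar'_injective
  refine AddMonoidAlgebra.coeff_eq_zero.mp (linearIndependent_iff.mp hli g.coeff ?_)
  rw [Finsupp.linearCombination_apply]
  funext t
  have := h t.toAdd
  rw [psiFun, Finsupp.sum] at this
  rw [Finsupp.sum, Finset.sum_apply]
  simpa [expChar', smul_eq_mul] using this

lemma psiFun_exists_ne (a b : ℝ) (hab : a < b) (g : AddMonoidAlgebra ℝ ℝ) (hg : g ≠ 0) :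
    ∃ x0 ∈ Set.Ioo a b, psiFun g x0 ≠ 0 := by
  by_contra hcon
  push_neg at hcon
  apply hg
  apply psiFun_eq_zero
  have hmid : (a + b) / 2 ∈ Set.Ioo a b := ⟨by linarith, by linarith⟩
  have hev : psiFun g =ᶠ[nhds ((a + b) / 2)] 0 := by
    filter_upwards [isOpen_Ioo.mem_nhds hmid] with t ht
    exact hcon t ht
  have := (psiFun_analytic g).eqOn_zero_of_preconnected_of_eventuallyEq_zero
    isPreconnected_univ (Set.mem_univ ((a + b) / 2)) hev
  exact fun t => this (Set.mem_univ t)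

lemma part1 (a b : ℝ) (hab : a < b) :
    ∀ g : AddMonoidAlgebra ℝ ℝ, g ≠ 0 →
      0 < ∫ x in a..b, Finsupp.sum (g * g).coeff fun e r => r * Real.exp (e * x) := by
  intro g hg
  have key : ∀ x : ℝ, (Finsupp.sum (g * g).coeff fun e r => r * Real.exp (e * x))
      = (psiFun g x) ^ 2 := by
    intro x
    rw [show (Finsupp.sum (g * g).coeff fun e r => r * Real.exp (e * x)) = psiFun (g * g) x from rfl,
      psiFun_mul, sq]
  simp only [key]
  refine (intervalIntegral.integral_pos_iff_support_of_nonneg_ae'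
    (Filter.Eventually.of_forall fun x => sq_nonneg _)
    (((psiFun_continuous g).pow 2).intervalIntegrable a b)).mpr ⟨hab, ?_⟩
  obtain ⟨x0, hx0, hne⟩ := psiFun_exists_ne a b hab g hg
  have hUo : IsOpen ({x | psiFun g x ≠ 0} ∩ Set.Ioo a b) :=
    (isOpen_compl_singleton.preimage (psiFun_continuous g)).inter isOpen_Ioo
  have hpos : 0 < MeasureTheory.volume ({x | psiFun g x ≠ 0} ∩ Set.Ioo a b) :=
    hUo.measure_pos _ ⟨x0, hne, hx0⟩
  refine lt_of_lt_of_le hpos (measure_mono ?_)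
  rintro y ⟨hy1, hy2⟩
  exact ⟨pow_ne_zero 2 hy1, Set.Ioo_subset_Ioc_self hy2⟩

/-- Let `T` be the functional on the group ring `ℝ[ℝ]` defined by integrating the
associated exponential sum over a compact interval `[a, b]` with `a < b`.  Then
`T(g²) > 0` for every nonzero `g`, and consequently the function
`t ↦ ∫ x in a..b, exp(t x)` is positive definite on `ℝ`. -/
theorem integral_functional_positive_on_squares (a b : ℝ) (hab : a < b) :
    (∀ g : AddMonoidAlgebra ℝ ℝ, g ≠ 0 →
      0 < ∫ x in a..b, Finsupp.sum (g * g).coeff fun e r => r * Real.exp (e * x)) ∧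
    (∀ (k : ℕ) (x : Fin k → ℝ), Function.Injective x →
      ∀ c : Fin k → ℝ, c ≠ 0 →
        0 < ∑ i, ∑ j, c i * c j * ∫ t in a..b, Real.exp ((x i + x j) * t)) := by
  refine ⟨part1 a b hab, ?_⟩
  intro k x hx c hc
  set g : AddMonoidAlgebra ℝ ℝ := ∑ i, AddMonoidAlgebra.single (x i) (c i) with hgdef
  have hg : g ≠ 0 := by
    obtain ⟨i, hi⟩ := Function.ne_iff.mp hc
    intro h0
    have hval : g.coeff (x i) = c i := by
      rw [hgdef, AddMonoidAlgebra.coeff_sum, Finsupp.finset_sum_apply]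
      rw [Finset.sum_eq_single i]
      · simp [Finsupp.single_apply]
      · intro j _ hj
        simp [Finsupp.single_apply, hx.ne hj]
      · simp
    rw [h0] at hval
    exact hi (by simpa using hval.symm)
  have hpsi : ∀ t, psiFun g t = ∑ i, c i * Real.exp (x i * t) := by
    intro t
    rw [psiFun_eq_lift, hgdef, map_sum]
    refine Finset.sum_congr rfl fun i _ => ?_
    rw [← psiFun_eq_lift, psiFun, AddMonoidAlgebra.coeff_single, Finsupp.sum_single_index (by rw [zero_mul])]
  have key : ∀ t : ℝ, (∑ i, ∑ j, c i * c j * Real.exp ((x i + x j) * t))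
      = psiFun (g * g) t := by
    intro t
    rw [psiFun_mul, hpsi, Finset.sum_mul_sum]
    refine Finset.sum_congr rfl fun i _ => Finset.sum_congr rfl fun j _ => ?_
    rw [add_mul, Real.exp_add]; ring
  have hcont : ∀ e : ℝ, Continuous fun t : ℝ => Real.exp (e * t) := fun e =>
    Real.continuous_exp.comp (continuous_const.mul continuous_id)
  calc (0:ℝ) < ∫ t in a..b, Finsupp.sum (g * g).coeff fun e r => r * Real.exp (e * t) :=
        part1 a b hab g hg
    _ = ∫ t in a..b, ∑ i, ∑ j, c i * c j * Real.exp ((x i + x j) * t) := by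
        simp only [key]; rfl
    _ = ∑ i, ∫ t in a..b, ∑ j, c i * c j * Real.exp ((x i + x j) * t) := by
        refine intervalIntegral.integral_finset_sum fun i _ => ?_
        exact (continuous_finset_sum _ fun j _ =>
          continuous_const.mul (hcont _)).intervalIntegrable a b
    _ = ∑ i, ∑ j, ∫ t in a..b, c i * c j * Real.exp ((x i + x j) * t) := by
        refine Finset.sum_congr rfl fun i _ => ?_
        exact intervalIntegral.integral_finset_sum fun j _ =>
          (continuous_const.mul (hcont _)).intervalIntegrable a b
    _ = ∑ i, ∑ j, c i * c j * ∫ t in a..b, Real.exp ((x i + x j) * t) := by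
        refine Finset.sum_congr rfl fun i _ => Finset.sum_congr rfl fun j _ => ?_
        rw [intervalIntegral.integral_const_mul]
end

section
/- Let G be a finite simple graph with stability number α(G), adjacency matrix A, identity I, and all-ones matrix J. Then the matrix Q(G) = α(G)(I + A) − J is copositive, i.e., x^T Q(G) x ≥ 0 for every vector x with nonnegative real entries. -/
open Matrix

namespace MSaux
variable {n : ℕ}

def dd (i j k : Fin n) : ℝ := (if k = i then 1 else 0) - (if k = j then 1 else 0)

lemma sum_dd_mul (i j : Fin n) (g : Fin n → ℝ) :
    ∑ k, dd i j k * g k = g i - g j := by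
  simp [dd, sub_mul, Finset.sum_sub_distrib, Finset.sum_ite_eq']

def Q (c : Fin n → Fin n → ℝ) (x : Fin n → ℝ) : ℝ := ∑ k, ∑ l, c k l * x k * x l

lemma shift (c : Fin n → Fin n → ℝ) (hsym : ∀ k l, c k l = c l k)
    (i j : Fin n) (hii : c i i = 0) (hjj : c j j = 0) (hij0 : c i j = 0)
    (x : Fin n → ℝ) :
    Q c (fun k => x k + x j * dd i j k)
      = Q c x + 2 * x j * ((∑ l, c i l * x l) - (∑ l, c j l * x l)) := by
  have hA : ∑ k, dd i j k * ∑ l, c k l * x l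
      = (∑ l, c i l * x l) - (∑ l, c j l * x l) :=
    sum_dd_mul i j (fun k => ∑ l, c k l * x l)
  have hB : ∑ k, ∑ l, dd i j l * (c k l * x k)
      = (∑ l, c i l * x l) - (∑ l, c j l * x l) := by
    rw [Finset.sum_comm]
    have h1 : ∀ l : Fin n, ∑ k, dd i j l * (c k l * x k) = dd i j l * ∑ k, c l k * x k := by
      intro l
      rw [Finset.mul_sum]
      exact Finset.sum_congr rfl fun k _ => by rw [hsym l k]
    simp only [h1]
    exact sum_dd_mul i j (fun l => ∑ k, c l k * x k)
  have hD : ∑ k, dd i j k * ∑ l, dd i j l * c k l = 0 := by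
    have h2 : ∀ k : Fin n, ∑ l, dd i j l * c k l = c k i - c k j :=
      fun k => sum_dd_mul i j (fun l => c k l)
    simp only [h2]
    rw [sum_dd_mul i j (fun k => c k i - c k j)]
    rw [hii, hjj, hij0, hsym j i, hij0]
    ring
  have expand : ∀ k l : Fin n, c k l * (x k + x j * dd i j k) * (x l + x j * dd i j l)
      = c k l * x k * x l + x j * (dd i j k * (c k l * x l))
        + x j * (dd i j l * (c k l * x k))
        + x j * x j * (dd i j k * (dd i j l * c k l)) := by
    intro k l; ring
  unfold Q
  simp only [expand, Finset.sum_add_distrib, ← Finset.mul_sum]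
  rw [hA, hB, hD]
  ring

def cM (G : SimpleGraph (Fin n)) [DecidableRel G.Adj] (k l : Fin n) : ℝ :=
  if k ≠ l ∧ ¬ G.Adj k l then 1 else 0

lemma cM_symm (G : SimpleGraph (Fin n)) [DecidableRel G.Adj] (k l : Fin n) :
    cM G k l = cM G l k := by
  unfold cM
  simp only [ne_comm, G.adj_comm]

lemma cM_diag (G : SimpleGraph (Fin n)) [DecidableRel G.Adj] (k : Fin n) :
    cM G k k = 0 := by simp [cM]

lemma cM_adj (G : SimpleGraph (Fin n)) [DecidableRel G.Adj] {k l : Fin n}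
    (h : G.Adj k l) : cM G k l = 0 := by simp [cM, h]

/-- The step: zero out coordinate `j`, moving its mass to `i`, without decreasing `Q`. -/
lemma step (G : SimpleGraph (Fin n)) [DecidableRel G.Adj] (s : Finset (Fin n))
    (i j : Fin n) (hi : i ∈ s) (hAdj : G.Adj i j)
    (x : Fin n → ℝ) (hx : ∀ k, 0 ≤ x k) (hsupp : ∀ k ∉ s, x k = 0)
    (hge : (∑ l, cM G j l * x l) ≤ ∑ l, cM G i l * x l) :
    ∃ y : Fin n → ℝ, (∀ k, 0 ≤ y k) ∧ (∀ k ∉ s.erase j, y k = 0) ∧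
      (∑ k, y k) = (∑ k, x k) ∧ Q (cM G) x ≤ Q (cM G) y := by
  have hij : i ≠ j := G.ne_of_adj hAdj
  refine ⟨fun k => x k + x j * dd i j k, ?_, ?_, ?_, ?_⟩
  · intro k
    show 0 ≤ x k + x j * dd i j k
    by_cases hki : k = i
    · have hdd : dd i j i = 1 := by simp [dd, hij]
      rw [hki, hdd]
      nlinarith [hx i, hx j]
    · by_cases hkj : k = j
      · have hdd : dd i j j = -1 := by simp [dd, Ne.symm hij]
        rw [hkj, hdd]
        nlinarith [hx j]
      · simp [dd, hki, hkj, hx k]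
  · intro k hk
    show x k + x j * dd i j k = 0
    by_cases hkj : k = j
    · have hdd : dd i j j = -1 := by simp [dd, Ne.symm hij]
      rw [hkj, hdd]
      ring
    · have hks : k ∉ s := fun hks => hk (Finset.mem_erase.2 ⟨hkj, hks⟩)
      have hki : k ≠ i := by
        rintro rfl; exact hks hi
      simp [dd, hki, hkj, hsupp k hks]
  · have h0 : ∑ k, dd i j k * (1 : ℝ) = 1 - 1 := sum_dd_mul i j (fun _ => 1)
    simp only [mul_one] at h0
    rw [Finset.sum_add_distrib, ← Finset.mul_sum, h0]
    ring
  · rw [shift (cM G) (cM_symm G) i j (cM_diag G i) (cM_diag G j) (cM_adj G hAdj) x]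
    nlinarith [hx j, hge]

lemma key (G : SimpleGraph (Fin n)) [DecidableRel G.Adj] (α : ℕ)
    (hub : ∀ s : Finset (Fin n), (∀ i ∈ s, ∀ j ∈ s, ¬ G.Adj i j) → s.card ≤ α)
    (s : Finset (Fin n)) :
    ∀ x : Fin n → ℝ, (∀ k, 0 ≤ x k) → (∀ k ∉ s, x k = 0) →
      (α : ℝ) * Q (cM G) x ≤ ((α : ℝ) - 1) * (∑ k, x k) ^ 2 := by
  induction s using Finset.strongInduction with
  | _ s ih =>
    intro x hx hsupp
    by_cases hadj : ∃ i ∈ s, ∃ j ∈ s, G.Adj i j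
    · obtain ⟨i, hi, j, hj, hAdj⟩ := hadj
      rcases le_total (∑ l, cM G j l * x l) (∑ l, cM G i l * x l) with hge | hge
      · obtain ⟨y, hy, hysupp, hysum, hQ⟩ := step G s i j hi hAdj x hx hsupp hge
        have hss : s.erase j ⊂ s := Finset.erase_ssubset hj
        have := ih (s.erase j) hss y hy hysupp
        rw [hysum] at this
        have hαQ : (α : ℝ) * Q (cM G) x ≤ (α : ℝ) * Q (cM G) y :=
          mul_le_mul_of_nonneg_left hQ (by positivity)
        linarith
      · obtain ⟨y, hy, hysupp, hysum, hQ⟩ := step G s j i hj hAdj.symm x hx hsupp hge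
        have hss : s.erase i ⊂ s := Finset.erase_ssubset hi
        have := ih (s.erase i) hss y hy hysupp
        rw [hysum] at this
        have hαQ : (α : ℝ) * Q (cM G) x ≤ (α : ℝ) * Q (cM G) y :=
          mul_le_mul_of_nonneg_left hQ (by positivity)
        linarith
    · push_neg at hadj
      have hcard : s.card ≤ α := hub s hadj
      -- pointwise description of cM * x * x
      have hpt : ∀ k l, cM G k l * x k * x l = if k = l then 0 else x k * x l := by
        intro k l
        by_cases hk : x k = 0
        · simp [hk]
        · by_cases hl : x l = 0
          · simp [hl]
          · have hks : k ∈ s := by by_contra h; exact hk (hsupp k h)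
            have hls : l ∈ s := by by_contra h; exact hl (hsupp l h)
            by_cases hkl : k = l
            · subst hkl; simp [cM]
            · simp [cM, hkl, hadj k hks l hls]
      have hQx : Q (cM G) x = (∑ k, x k) ^ 2 - ∑ k, x k ^ 2 := by
        unfold Q
        simp only [hpt]
        have h1 : ∀ k : Fin n, ∑ l, (if k = l then 0 else x k * x l)
            = (∑ l, x k * x l) - x k * x k := by
          intro k
          have : ∀ l : Fin n, (if k = l then (0:ℝ) else x k * x l)
              = x k * x l - (if k = l then x k * x l else 0) := by
            intro l; split <;> ring
          simp only [this, Finset.sum_sub_distrib, Finset.sum_ite_eq, Finset.mem_univ,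
            if_true]
        simp only [h1, Finset.sum_sub_distrib]
        rw [pow_two, Finset.sum_mul_sum]
        congr 1
        exact Finset.sum_congr rfl fun k _ => (pow_two (x k)).symm
      rw [hQx]
      have hsum : ∑ k, x k = ∑ k ∈ s, x k :=
        (Finset.sum_subset s.subset_univ (fun k _ hk => hsupp k hk)).symm
      have hsq : ∑ k, x k ^ 2 = ∑ k ∈ s, x k ^ 2 :=
        (Finset.sum_subset s.subset_univ (fun k _ hk => by rw [hsupp k hk]; ring)).symm
      have hcs : (∑ k ∈ s, x k) ^ 2 ≤ (s.card : ℝ) * ∑ k ∈ s, x k ^ 2 :=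
        sq_sum_le_card_mul_sum_sq
      have hsq_nonneg : (0:ℝ) ≤ ∑ k ∈ s, x k ^ 2 :=
        Finset.sum_nonneg fun k _ => sq_nonneg _
      have hcard' : (s.card : ℝ) ≤ (α : ℝ) := by exact_mod_cast hcard
      rw [hsum, hsq]
      nlinarith

end MSaux

open MSaux in
/-- Motzkin–Straus: for a finite simple graph `G` with stability number `α`, adjacency
matrix `A`, identity `I` and all-ones matrix `J`, the matrix `Q(G) = α (I + A) − J` is
copositive. -/
theorem motzkinStraus_copositive (n : ℕ) (G : SimpleGraph (Fin n))
    [DecidableRel G.Adj] (α : ℕ)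
    (hα : IsGreatest
      {k | ∃ s : Finset (Fin n), s.card = k ∧ ∀ i ∈ s, ∀ j ∈ s, ¬ G.Adj i j} α)
    (x : Fin n → ℝ) (hx : ∀ i, 0 ≤ x i) :
    0 ≤ x ⬝ᵥ ((α : ℝ) • (1 + G.adjMatrix ℝ) - Matrix.of fun _ _ => 1).mulVec x := by
  have hub : ∀ s : Finset (Fin n), (∀ i ∈ s, ∀ j ∈ s, ¬ G.Adj i j) → s.card ≤ α :=
    fun s hs => hα.2 ⟨s, rfl, hs⟩
  have hkey := key G α hub Finset.univ x hx (fun k hk => absurd (Finset.mem_univ k) hk)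
  have hM : ∀ k l, (((α : ℝ) • (1 + G.adjMatrix ℝ) - Matrix.of fun _ _ => 1)
      : Matrix (Fin n) (Fin n) ℝ) k l = ((α : ℝ) - 1) - (α : ℝ) * cM G k l := by
    intro k l
    by_cases hkl : k = l
    · subst hkl
      simp [Matrix.sub_apply, Matrix.smul_apply, Matrix.add_apply, Matrix.one_apply,
        cM, G.irrefl]
    · by_cases hadj : G.Adj k l
      · simp [Matrix.sub_apply, Matrix.smul_apply, Matrix.add_apply, Matrix.one_apply,
          hkl, cM, hadj]
      · simp [Matrix.sub_apply, Matrix.smul_apply, Matrix.add_apply, Matrix.one_apply,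
          hkl, cM, hadj]
  have hform : x ⬝ᵥ ((α : ℝ) • (1 + G.adjMatrix ℝ) - Matrix.of fun _ _ => 1).mulVec x
      = ((α : ℝ) - 1) * (∑ k, x k) ^ 2 - (α : ℝ) * Q (cM G) x := by
    simp only [dotProduct, mulVec, hM]
    have e : ∀ k, x k * ∑ l, ((((α : ℝ) - 1) - (α : ℝ) * cM G k l) * x l)
        = ((α : ℝ) - 1) * (x k * ∑ l, x l) - (α : ℝ) * ∑ l, cM G k l * x k * x l := by
      intro k
      calc x k * ∑ l, ((((α : ℝ) - 1) - (α : ℝ) * cM G k l) * x l)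
          = ∑ l, ((((α : ℝ) - 1) * (x k * x l)) - (α : ℝ) * (cM G k l * x k * x l)) := by
            rw [Finset.mul_sum]
            exact Finset.sum_congr rfl fun l _ => by ring
        _ = ((α : ℝ) - 1) * (x k * ∑ l, x l) - (α : ℝ) * ∑ l, cM G k l * x k * x l := by
            rw [Finset.sum_sub_distrib]
            simp only [← Finset.mul_sum]
    simp only [e, Finset.sum_sub_distrib, ← Finset.mul_sum]
    unfold Q
    rw [← Finset.sum_mul, ← pow_two]
  rw [hform]
  linarith
end

section
/- Let f ∈ C^{2k−2}(ℝ) and suppose f is k-positive semidefinite, i.e., for all x1,...,xk ∈ ℝ the matrix (f(xi + xj))_{1≤i,j≤k} is positive semidefinite. Then for every x ∈ ℝ the Hankel matrix H_f(x) = (f^{(i+j−2)}(x))_{1≤i,j≤k} of derivatives is positive semidefinite. -/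
open Matrix

open Finset

lemma fwdDiff_zero_fun (t : ℝ) (n : ℕ) : (fwdDiff t)^[n] (0 : ℝ → ℝ) = 0 := by
  induction n with
  | zero => rfl
  | succ n ih =>
      rw [Function.iterate_succ_apply]
      have : fwdDiff t (0 : ℝ → ℝ) = 0 := by funext y; simp [fwdDiff]
      rw [this, ih]

lemma fwdDiff_pow_expand (t : ℝ) (p : ℕ) :
    fwdDiff t (fun y : ℝ => y ^ p) =
      fun y => ∑ q ∈ range p, (p.choose q : ℝ) * t ^ (p - q) * y ^ q := by
  funext y
  have h := add_pow y t p
  rw [Finset.sum_range_succ] at h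
  simp only [fwdDiff, h, Nat.choose_self, Nat.sub_self, pow_zero, Nat.cast_one, mul_one]
  rw [add_sub_cancel_right]
  exact Finset.sum_congr rfl fun q _ => by ring

lemma fwdDiff_iter_pow_of_lt (t : ℝ) :
    ∀ p r : ℕ, p < r → (fwdDiff t)^[r] (fun y : ℝ => y ^ p) = 0 := by
  intro p
  induction p using Nat.strong_induction_on with
  | _ p ih =>
    intro r hr
    obtain ⟨r, rfl⟩ : ∃ r', r = r' + 1 := ⟨r - 1, by omega⟩
    rw [Function.iterate_succ_apply, fwdDiff_pow_expand]
    have h1 : (fun y : ℝ => ∑ q ∈ range p, (p.choose q : ℝ) * t ^ (p - q) * y ^ q)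
        = ∑ q ∈ range p, ((p.choose q : ℝ) * t ^ (p - q)) • (fun y : ℝ => y ^ q) := by
      funext y
      simp [Finset.sum_apply, mul_assoc]
    rw [h1, fwdDiff_iter_finset_sum]
    rw [Finset.sum_eq_zero]
    intro q hq
    have hq' := Finset.mem_range.mp hq
    rw [fwdDiff_iter_const_smul, ih q hq' r (by omega), smul_zero]

lemma fwdDiff_iter_pow_self (t : ℝ) (r : ℕ) :
    (fwdDiff t)^[r] (fun y : ℝ => y ^ r) = fun _ => (r.factorial : ℝ) * t ^ r := by
  induction r with
  | zero => funext y; simp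
  | succ r ih =>
    rw [Function.iterate_succ_apply, fwdDiff_pow_expand]
    have h1 : (fun y : ℝ => ∑ q ∈ range (r + 1), ((r + 1).choose q : ℝ) * t ^ (r + 1 - q) * y ^ q)
        = ∑ q ∈ range (r + 1), (((r + 1).choose q : ℝ) * t ^ (r + 1 - q)) • (fun y : ℝ => y ^ q) := by
      funext y
      simp [Finset.sum_apply, mul_assoc]
    rw [h1, fwdDiff_iter_finset_sum, Finset.sum_range_succ]
    rw [Finset.sum_eq_zero (fun q hq => by
      rw [fwdDiff_iter_const_smul, fwdDiff_iter_pow_of_lt t q r (Finset.mem_range.mp hq), smul_zero])]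
    rw [zero_add, fwdDiff_iter_const_smul, ih]
    funext y
    have e : r + 1 - r = 1 := by omega
    simp only [Pi.smul_apply, smul_eq_mul, Nat.choose_succ_self_right, e, pow_one,
      Nat.factorial_succ]
    push_cast
    ring

lemma iteratedDeriv_fwdDiff (r : ℕ) (f : ℝ → ℝ) (hf : ContDiff ℝ r f) (t : ℝ) :
    iteratedDeriv r (fwdDiff t f) = fun y => iteratedDeriv r f (y + t) - iteratedDeriv r f y := by
  have h1 : fwdDiff t f = (fun y : ℝ => f (y + t)) - f := rfl
  funext y
  have hc : ContDiff ℝ (r : ℕ) (fun y : ℝ => f (y + t)) := by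
    exact hf.comp (contDiff_id.add contDiff_const)
  rw [h1, ← iteratedDerivWithin_univ,
    iteratedDerivWithin_sub (Set.mem_univ y) uniqueDiffOn_univ
      hc.contDiffWithinAt hf.contDiffWithinAt,
    iteratedDerivWithin_univ, iteratedDerivWithin_univ, iteratedDeriv_comp_add_const]

lemma abs_fwdDiff_iter_le : ∀ (r : ℕ) (f : ℝ → ℝ), ContDiff ℝ r f → ∀ (x t C : ℝ), 0 ≤ t →
    (∀ y ∈ Set.Icc x (x + r * t), |iteratedDeriv r f y| ≤ C) →
    |(fwdDiff t)^[r] f x| ≤ C * t ^ r := by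
  intro r
  induction r with
  | zero =>
      intro f _ x t C _ hC
      simpa using hC x (by simp)
  | succ r ih =>
      intro f hf x t C ht hC
      rw [Function.iterate_succ_apply]
      have hf' : ContDiff ℝ r f := hf.of_le (by exact_mod_cast Nat.le_succ r)
      have hg : ContDiff ℝ r (fwdDiff t f) :=
        (hf'.comp (contDiff_id.add contDiff_const)).sub hf'
      have hdiff : Differentiable ℝ (iteratedDeriv r f) :=
        hf.differentiable_iteratedDeriv r (by exact_mod_cast Nat.lt_succ_self r)
      have key : ∀ y ∈ Set.Icc x (x + r * t), |iteratedDeriv r (fwdDiff t f) y| ≤ C * t := by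
        intro y hy
        rw [iteratedDeriv_fwdDiff r f hf' t]
        have hsub : Set.Icc x (x + (r + 1 : ℕ) * t) ⊆ Set.Icc x (x + (r + 1 : ℕ) * t) := le_refl _
        have hy1 : y ∈ Set.Icc x (x + (r + 1 : ℕ) * t) := by
          constructor
          · exact hy.1
          · refine hy.2.trans ?_
            push_cast
            nlinarith
        have hy2 : y + t ∈ Set.Icc x (x + (r + 1 : ℕ) * t) := by
          constructor
          · linarith [hy.1]
          · have := hy.2
            push_cast
            push_cast at this
            nlinarith
        have := Convex.norm_image_sub_le_of_norm_deriv_le (s := Set.Icc x (x + (r + 1 : ℕ) * t))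
          (f := iteratedDeriv r f) (C := C)
          (fun z _ => hdiff z)
          (fun z hz => by
            rw [← iteratedDeriv_succ]
            exact hC z hz)
          (convex_Icc _ _) hy1 hy2
        simpa [abs_sub_comm, add_sub_cancel_left] using this.trans_eq (by
          rw [add_sub_cancel_left, Real.norm_eq_abs, abs_of_nonneg ht])
      have := ih (fwdDiff t f) hg x t (C * t) ht key
      calc |(fwdDiff t)^[r] (fwdDiff t f) x| ≤ C * t * t ^ r := this
        _ = C * t ^ (r + 1) := by ring

lemma iteratedDeriv_pow_self (r : ℕ) :
    iteratedDeriv r (fun y : ℝ => y ^ r) = fun _ => (r.factorial : ℝ) := by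
  induction r with
  | zero => funext y; simp
  | succ r ih =>
      funext y
      rw [iteratedDeriv_succ', show deriv (fun y : ℝ => y ^ (r + 1)) = fun y => ((r + 1 : ℕ) : ℝ) * y ^ (r + 1 - 1) from
        funext fun z => deriv_pow_field (r + 1)]
      have hc : ContDiffOn ℝ (r : ℕ) (fun y : ℝ => y ^ r) Set.univ :=
        (contDiff_id.pow r).contDiffOn
      have : iteratedDeriv r (fun y : ℝ => ((r : ℝ) + 1) * y ^ r) y
          = ((r : ℝ) + 1) * iteratedDeriv r (fun y : ℝ => y ^ r) y := by
        rw [← iteratedDerivWithin_univ, ← iteratedDerivWithin_univ]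
        exact iteratedDerivWithin_const_mul (Set.mem_univ y) uniqueDiffOn_univ _ (hc y (Set.mem_univ y))
      simp only [Nat.cast_add, Nat.cast_one, Nat.add_sub_cancel] at *
      rw [this, ih]
      rw [Nat.factorial_succ]
      push_cast
      ring

lemma tendsto_fwdDiff_iter_div (r : ℕ) (f : ℝ → ℝ) (hf : ContDiff ℝ r f) (x : ℝ) :
    Filter.Tendsto (fun t : ℝ => (fwdDiff t)^[r] f x / t ^ r) (nhdsWithin 0 (Set.Ioi 0))
      (nhds (iteratedDeriv r f x)) := by
  rw [Metric.tendsto_nhdsWithin_nhds]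
  intro ε hε
  set c := iteratedDeriv r f x with hc
  have hcont : Continuous (iteratedDeriv r f) := hf.continuous_iteratedDeriv r le_rfl
  have hca : ContinuousAt (iteratedDeriv r f) x := hcont.continuousAt
  rw [Metric.continuousAt_iff] at hca
  obtain ⟨δ₀, hδ₀pos, hδ₀⟩ := hca (ε / 2) (by linarith)
  refine ⟨δ₀ / (r + 1), by positivity, ?_⟩
  intro t htIoi htd
  have ht : 0 < t := htIoi
  have htr : 0 < t ^ r := pow_pos ht r
  have htd' : t < δ₀ / (r + 1) := by
    rw [Real.dist_eq, sub_zero, abs_of_pos ht] at htd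
    exact htd
  set c' := c / (r.factorial : ℝ) with hc'
  set g : ℝ → ℝ := fun y => y ^ r with hg
  have hgc : ContDiff ℝ (r : ℕ) g := contDiff_id.pow r
  -- value of iterated difference of f + (-c') • g
  have e1 : (fwdDiff t)^[r] (f + (-c') • g) x = (fwdDiff t)^[r] f x - c * t ^ r := by
    rw [fwdDiff_iter_add, fwdDiff_iter_const_smul]
    have : (fwdDiff t)^[r] g = fun _ => (r.factorial : ℝ) * t ^ r := fwdDiff_iter_pow_self t r
    rw [Pi.add_apply, Pi.smul_apply, this]
    have hfac : (r.factorial : ℝ) ≠ 0 := by positivity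
    rw [hc', smul_eq_mul, neg_mul, ← sub_eq_add_neg, ← mul_assoc, div_mul_cancel₀ _ hfac]
  -- iterated derivative of f + (-c') • g
  have e2 : ∀ y : ℝ, iteratedDeriv r (f + (-c') • g) y = iteratedDeriv r f y - c := by
    intro y
    have hsg : ContDiffOn ℝ (r : ℕ) ((-c') • g) Set.univ := (hgc.const_smul (-c')).contDiffOn
    rw [← iteratedDerivWithin_univ,
      iteratedDerivWithin_add (Set.mem_univ y) uniqueDiffOn_univ hf.contDiffWithinAt (hsg y (Set.mem_univ y)),
      iteratedDerivWithin_const_smul (Set.mem_univ y) uniqueDiffOn_univ (-c') hgc.contDiffWithinAt,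
      iteratedDerivWithin_univ, iteratedDerivWithin_univ, iteratedDeriv_pow_self]
    have hfac : (r.factorial : ℝ) ≠ 0 := by positivity
    simp only [smul_eq_mul]
    rw [hc']
    field_simp
    ring
  -- bound
  have hφ : ContDiff ℝ (r : ℕ) (f + (-c') • g) := hf.add (hgc.const_smul (-c'))
  have hbd : ∀ y ∈ Set.Icc x (x + r * t), |iteratedDeriv r (f + (-c') • g) y| ≤ ε / 2 := by
    intro y hy
    rw [e2 y]
    have hdy : dist y x < δ₀ := by
      rw [Real.dist_eq, abs_of_nonneg (by linarith [hy.1])]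
      have : y ≤ x + r * t := hy.2
      have h1 : (r : ℝ) * t ≤ (r + 1) * t := by nlinarith
      have h2 : ((r : ℝ) + 1) * t < δ₀ := by
        have h3 := (lt_div_iff₀ (by positivity : (0:ℝ) < (r:ℝ)+1)).mp htd'
        linarith
      linarith
    exact le_of_lt (hδ₀ hdy)
  have hb := abs_fwdDiff_iter_le r (f + (-c') • g) hφ x t (ε / 2) (le_of_lt ht) hbd
  rw [e1] at hb
  rw [Real.dist_eq]
  have heq : (fwdDiff t)^[r] f x / t ^ r - c = ((fwdDiff t)^[r] f x - c * t ^ r) / t ^ r := by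
    field_simp
  rw [heq, abs_div, abs_of_pos htr, div_lt_iff₀ htr]
  calc |(fwdDiff t)^[r] f x - c * t ^ r| ≤ ε / 2 * t ^ r := hb
    _ < ε * t ^ r := by nlinarith

lemma fwdDiff_iter_eq_sum_fin (k : ℕ) (t : ℝ) (m : ℕ) (hm : m < k) (g : ℝ → ℝ) (z : ℝ) :
    (fwdDiff t)^[m] g z
      = ∑ i : Fin k, ((-1 : ℝ) ^ (m - (i : ℕ)) * (m.choose (i : ℕ))) * g (z + (i : ℕ) * t) := by
  rw [fwdDiff_iter_eq_sum_shift]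
  rw [Finset.sum_subset (Finset.range_subset_range.mpr hm)
    (fun i hik hi => by
      have h1 : m < i := by
        simp only [Finset.mem_range] at hik hi
        omega
      simp [Nat.choose_eq_zero_of_lt h1])]
  rw [← Finset.sum_range
    (fun i => ((-1 : ℝ) ^ (m - i) * (m.choose i)) * g (z + i * t))]
  apply Finset.sum_congr rfl
  intro i _
  rw [zsmul_eq_mul, nsmul_eq_mul]
  push_cast
  ring

/-- If `f ∈ C^{2k−2}(ℝ)` is `k`-positive semidefinite (all matrices `(f(xᵢ + xⱼ))` of
order `k` are positive semidefinite), then for every `x ∈ ℝ` the Hankel matrix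
`H_f(x) = (f^{(i+j−2)}(x))_{1 ≤ i,j ≤ k}` is positive semidefinite. -/
theorem hankel_posSemidef_of_kPosSemidef (k : ℕ) (hk : 0 < k) (f : ℝ → ℝ)
    (hf : ContDiff ℝ (2 * k - 2 : ℕ) f)
    (hpsd : ∀ x : Fin k → ℝ, (Matrix.of fun i j => f (x i + x j)).PosSemidef) :
    ∀ x : ℝ,
      (Matrix.of fun i j : Fin k => iteratedDeriv (i.1 + j.1) f x).PosSemidef := by
  intro x
  refine PosSemidef.of_dotProduct_mulVec_nonneg ?_ ?_
  · ext i j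
    simp only [Matrix.conjTranspose_apply, Matrix.of_apply, star_trivial]
    rw [Nat.add_comm]
  · intro v
    have hL : dotProduct (star v)
        ((Matrix.of fun i j : Fin k => iteratedDeriv (i.1 + j.1) f x) *ᵥ v)
        = ∑ m : Fin k, ∑ n : Fin k, v m * v n * iteratedDeriv (m.1 + n.1) f x := by
      simp only [dotProduct, Matrix.mulVec, Matrix.of_apply, Pi.star_apply, star_trivial]
      exact Finset.sum_congr rfl fun m _ => by
        rw [Finset.mul_sum]
        exact Finset.sum_congr rfl fun n _ => by ring
    rw [hL]
    -- the limit of the sampled quadratic forms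
    have hQ : Filter.Tendsto
        (fun t : ℝ => ∑ m : Fin k, ∑ n : Fin k,
          v m * v n * ((fwdDiff t)^[m.1 + n.1] f x / t ^ (m.1 + n.1)))
        (nhdsWithin 0 (Set.Ioi 0))
        (nhds (∑ m : Fin k, ∑ n : Fin k, v m * v n * iteratedDeriv (m.1 + n.1) f x)) := by
      apply tendsto_finset_sum
      intro m _
      apply tendsto_finset_sum
      intro n _
      have hmn : ContDiff ℝ (m.1 + n.1 : ℕ) f := by
        apply hf.of_le
        exact_mod_cast Nat.cast_le.mpr (by omega : m.1 + n.1 ≤ 2 * k - 2)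
      exact (tendsto_fwdDiff_iter_div (m.1 + n.1) f hmn x).const_mul (v m * v n)
    refine ge_of_tendsto hQ ?_
    filter_upwards [self_mem_nhdsWithin] with t ht
    have htpos : (0 : ℝ) < t := ht
    have htne : t ≠ 0 := ne_of_gt htpos
    -- sample points and coefficient vectors
    set y : Fin k → ℝ := fun i => x / 2 + (i : ℕ) * t with hy
    set w : ℕ → ℕ → ℝ := fun m i => (-1 : ℝ) ^ (m - i) * (m.choose i) with hw
    set u : Fin k → Fin k → ℝ := fun m i => v m * w m.1 i.1 / t ^ m.1 with hu
    set F : Matrix (Fin k) (Fin k) ℝ := Matrix.of fun i j => f (y i + y j) with hF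
    have h0 := (hpsd y).dotProduct_mulVec_nonneg (∑ m : Fin k, u m)
    have hstar : star (∑ m : Fin k, u m) = ∑ m : Fin k, u m := by
      simp
    rw [hstar] at h0
    -- bilinearity
    have hmv : F *ᵥ (∑ n : Fin k, u n) = ∑ n : Fin k, F *ᵥ u n := by
      rw [← Matrix.mulVecLin_apply, map_sum]
      simp [Matrix.mulVecLin_apply]
    have hdot : dotProduct (∑ m : Fin k, u m) (∑ n : Fin k, F *ᵥ u n)
        = ∑ m : Fin k, ∑ n : Fin k, dotProduct (u m) (F *ᵥ u n) := by
      simp only [dotProduct, Finset.sum_apply]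
      have e : ∀ i : Fin k, (∑ m : Fin k, u m i) * (∑ n : Fin k, (F *ᵥ u n) i)
          = ∑ m : Fin k, ∑ n : Fin k, u m i * (F *ᵥ u n) i := by
        intro i
        rw [Finset.sum_mul_sum]
      rw [Finset.sum_congr rfl fun i _ => e i, Finset.sum_comm]
      exact Finset.sum_congr rfl fun m _ => Finset.sum_comm
    have hterm : ∀ m n : Fin k, dotProduct (u m) (F *ᵥ u n)
        = v m * v n * ((fwdDiff t)^[(m : ℕ) + (n : ℕ)] f x / t ^ ((m : ℕ) + (n : ℕ))) := by
      intro m n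
      have e1 : (fwdDiff t)^[(m : ℕ) + (n : ℕ)] f x
          = ∑ i : Fin k, ((-1 : ℝ) ^ ((m : ℕ) - (i : ℕ)) * ((m : ℕ).choose (i : ℕ))) *
              ∑ j : Fin k, ((-1 : ℝ) ^ ((n : ℕ) - (j : ℕ)) * ((n : ℕ).choose (j : ℕ))) *
                f (x + (i : ℕ) * t + (j : ℕ) * t) := by
        rw [Function.iterate_add_apply,
          fwdDiff_iter_eq_sum_fin k t (m : ℕ) m.isLt ((fwdDiff t)^[(n : ℕ)] f) x]
        exact Finset.sum_congr rfl fun i _ => by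
          rw [fwdDiff_iter_eq_sum_fin k t (n : ℕ) n.isLt f (x + (i : ℕ) * t)]
      rw [e1]
      simp only [hu, hw, hy, hF, dotProduct, Matrix.mulVec, Matrix.of_apply]
      rw [Finset.sum_div, Finset.mul_sum]
      apply Finset.sum_congr rfl
      intro i _
      rw [Finset.mul_sum, Finset.mul_sum, Finset.sum_div, Finset.mul_sum]
      apply Finset.sum_congr rfl
      intro j _
      have harg : x / 2 + (i : ℕ) * t + (x / 2 + (j : ℕ) * t)
          = x + (i : ℕ) * t + (j : ℕ) * t := by ring
      rw [harg, pow_add]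
      field_simp
    rw [← hF] at h0
    calc (0 : ℝ) ≤ dotProduct (∑ m : Fin k, u m) (F *ᵥ ∑ m : Fin k, u m) := h0
      _ = ∑ m : Fin k, ∑ n : Fin k, dotProduct (u m) (F *ᵥ u n) := by rw [hmv, hdot]
      _ = ∑ m : Fin k, ∑ n : Fin k,
            v m * v n * ((fwdDiff t)^[(m : ℕ) + (n : ℕ)] f x / t ^ ((m : ℕ) + (n : ℕ))) :=
          Finset.sum_congr rfl fun m _ => Finset.sum_congr rfl fun n _ => hterm m n
end

section
/- Fix 0 < a1 < ... < ak and let g(x) = ∑_{m=1}^k exp(a_m x). For every ε > 0 the function f_ε(x) = g(x) + g(−x) − ε is not (k+1)-positive semidefinite: there exist pairwise distinct x1,...,x_{k+1} ∈ ℝ such that the matrix (f_ε(xi + xj))_{1≤i,j≤k+1} is not positive semidefinite. -/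
open Matrix

private lemma sum_sq_double {n : ℕ} (c v : Fin n → ℝ) :
    ∑ i, ∑ j, c i * (v i * v j) * c j = (∑ i, c i * v i) ^ 2 := by
  rw [sq, Finset.sum_mul_sum]
  exact Finset.sum_congr rfl fun i _ => Finset.sum_congr rfl fun j _ => by ring

private lemma sum_const_double {n : ℕ} (c : Fin n → ℝ) (ε : ℝ) :
    ∑ i, ∑ j, c i * ε * c j = ε * (∑ i, c i) ^ 2 := by
  rw [sq, Finset.sum_mul_sum, Finset.mul_sum]
  refine Finset.sum_congr rfl fun i _ => ?_
  rw [Finset.mul_sum]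
  exact Finset.sum_congr rfl fun j _ => by ring

private lemma triple_swap {n k : ℕ} (g : Fin k → Fin n → Fin n → ℝ) :
    ∑ i, ∑ j, ∑ m, g m i j = ∑ m, ∑ i, ∑ j, g m i j := by
  calc ∑ i, ∑ j, ∑ m, g m i j = ∑ i, ∑ m, ∑ j, g m i j :=
        Finset.sum_congr rfl fun i _ => Finset.sum_comm
    _ = ∑ m, ∑ i, ∑ j, g m i j := Finset.sum_comm

/-- Fix `0 < a₁ < ⋯ < a_k` and `g(x) = ∑ₘ exp(aₘ x)`.  For every `ε > 0` the function
`f_ε(x) = g(x) + g(−x) − ε` is not `(k+1)`-positive semidefinite: there are pairwise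
distinct `x₁, …, x_{k+1}` such that `(f_ε(xᵢ + xⱼ))` is not positive semidefinite. -/
theorem f_eps_not_kplusone_posSemidef (k : ℕ) (a : Fin k → ℝ)
    (hpos : ∀ m, 0 < a m) (hmono : StrictMono a) (ε : ℝ) (hε : 0 < ε) :
    ∃ x : Fin (k + 1) → ℝ, Function.Injective x ∧
      ¬ (Matrix.of fun i j : Fin (k + 1) =>
          (∑ m, Real.exp (a m * (x i + x j)))
            + (∑ m, Real.exp (-(a m) * (x i + x j))) - ε).PosSemidef := by
  classical
  set p : Polynomial ℝ := ∏ m : Fin k, (Polynomial.X - Polynomial.C (Real.exp (a m))) with hp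
  have hdeg : p.natDegree = k := by
    rw [hp, Polynomial.natDegree_prod_of_monic _ _ (fun m _ => Polynomial.monic_X_sub_C _)]
    simp
  set c : Fin (k+1) → ℝ := fun i => p.coeff i with hc
  have heval : ∀ r : ℝ, p.eval r = ∑ i : Fin (k+1), c i * r ^ (i : ℕ) := by
    intro r
    rw [Polynomial.eval_eq_sum_range' (by omega : p.natDegree < k+1),
      ← Fin.sum_univ_eq_sum_range]
  have hroot : ∀ m, p.eval (Real.exp (a m)) = 0 := by
    intro m
    rw [hp, Polynomial.eval_prod]
    exact Finset.prod_eq_zero (Finset.mem_univ m) (by simp)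
  have hone : p.eval 1 ≠ 0 := by
    rw [hp, Polynomial.eval_prod]
    refine Finset.prod_ne_zero_iff.2 fun m _ => ?_
    have : 1 < Real.exp (a m) := by
      rw [← Real.exp_zero]; exact Real.exp_lt_exp.2 (hpos m)
    simp only [Polynomial.eval_sub, Polynomial.eval_X, Polynomial.eval_C]
    intro h; linarith
  have hsumc : ∑ i, c i = p.eval 1 := by
    rw [heval 1]; simp
  -- exponential sum identity
  have hexpsum : ∀ (y X : ℝ),
      (∑ i : Fin (k+1), c i * Real.exp (y * (X + (i : ℕ))))
        = Real.exp (y * X) * p.eval (Real.exp y) := by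
    intro y X
    rw [heval, Finset.mul_sum]
    refine Finset.sum_congr rfl fun i _ => ?_
    have h1 : Real.exp (y * (X + (i : ℕ)))
        = Real.exp (y * X) * Real.exp y ^ (i : ℕ) := by
      rw [← Real.exp_nat_mul, ← Real.exp_add]
      congr 1; ring
    rw [h1]; ring
  -- quadratic form identity
  have hquad : ∀ x : Fin (k+1) → ℝ,
      c ⬝ᵥ ((Matrix.of fun i j : Fin (k + 1) =>
          (∑ m, Real.exp (a m * (x i + x j)))
            + (∑ m, Real.exp (-(a m) * (x i + x j))) - ε) *ᵥ c)
      = (∑ m, (∑ i, c i * Real.exp (a m * x i)) ^ 2)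
        + (∑ m, (∑ i, c i * Real.exp (-(a m) * x i)) ^ 2)
        - ε * (∑ i, c i) ^ 2 := by
    intro x
    have hLHS : c ⬝ᵥ ((Matrix.of fun i j : Fin (k + 1) =>
          (∑ m, Real.exp (a m * (x i + x j)))
            + (∑ m, Real.exp (-(a m) * (x i + x j))) - ε) *ᵥ c)
        = ∑ i, ∑ j, c i * ((∑ m, Real.exp (a m * (x i + x j)))
            + (∑ m, Real.exp (-(a m) * (x i + x j))) - ε) * c j := by
      simp only [dotProduct, mulVec, Matrix.of_apply, Finset.mul_sum]
      exact Finset.sum_congr rfl fun i _ => Finset.sum_congr rfl fun j _ => by ring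
    rw [hLHS]
    have step : ∀ i j : Fin (k+1),
        c i * ((∑ m, Real.exp (a m * (x i + x j)))
            + (∑ m, Real.exp (-(a m) * (x i + x j))) - ε) * c j
        = (∑ m, c i * (Real.exp (a m * x i) * Real.exp (a m * x j)) * c j)
          + (∑ m, c i * (Real.exp (-(a m) * x i) * Real.exp (-(a m) * x j)) * c j)
          - c i * ε * c j := by
      intro i j
      have e1 : ∀ m : Fin k, Real.exp (a m * (x i + x j))
          = Real.exp (a m * x i) * Real.exp (a m * x j) := by
        intro m; rw [← Real.exp_add]; congr 1; ring
      have e2 : ∀ m : Fin k, Real.exp (-(a m) * (x i + x j))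
          = Real.exp (-(a m) * x i) * Real.exp (-(a m) * x j) := by
        intro m; rw [← Real.exp_add]; congr 1; ring
      simp only [e1, e2]
      have expand : ∀ S1 S2 : ℝ, c i * (S1 + S2 - ε) * c j
          = c i * S1 * c j + c i * S2 * c j - c i * ε * c j := fun _ _ => by ring
      rw [expand, Finset.mul_sum, Finset.mul_sum, Finset.sum_mul, Finset.sum_mul]
    simp only [step]
    simp only [Finset.sum_add_distrib, Finset.sum_sub_distrib]
    rw [triple_swap (fun m i j => c i * (Real.exp (a m * x i) * Real.exp (a m * x j)) * c j),
      triple_swap (fun m i j => c i * (Real.exp (-(a m) * x i) * Real.exp (-(a m) * x j)) * c j),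
      sum_const_double]
    congr 1
    congr 1
    · exact Finset.sum_congr rfl fun m _ => sum_sq_double c _
    · exact Finset.sum_congr rfl fun m _ => sum_sq_double c _
  -- choose X large enough
  have hK : 0 < ε * (p.eval 1) ^ 2 := by
    apply mul_pos hε
    exact lt_of_le_of_ne (sq_nonneg _) (Ne.symm (pow_ne_zero 2 hone))
  have htend : Filter.Tendsto
      (fun X : ℝ => ∑ m : Fin k, (Real.exp (-(a m) * X) * p.eval (Real.exp (-(a m)))) ^ 2)
      Filter.atTop (nhds 0) := by
    have hm : ∀ m : Fin k, Filter.Tendsto (fun X : ℝ => Real.exp (-(a m) * X))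
        Filter.atTop (nhds 0) := by
      intro m
      have h1 : Filter.Tendsto (fun X : ℝ => a m * X) Filter.atTop Filter.atTop :=
        Filter.Tendsto.const_mul_atTop (hpos m) Filter.tendsto_id
      have h2 : Filter.Tendsto (fun X : ℝ => -(a m * X)) Filter.atTop Filter.atBot :=
        Filter.tendsto_neg_atTop_atBot.comp h1
      have h4 : (fun X : ℝ => Real.exp (-(a m) * X))
          = Real.exp ∘ (fun X : ℝ => -(a m * X)) := by
        funext X; simp [neg_mul]
      rw [h4]
      exact Real.tendsto_exp_atBot.comp h2
    have hterm : ∀ m : Fin k, Filter.Tendsto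
        (fun X : ℝ => (Real.exp (-(a m) * X) * p.eval (Real.exp (-(a m)))) ^ 2)
        Filter.atTop (nhds 0) := by
      intro m
      have := ((hm m).mul_const (p.eval (Real.exp (-(a m))))).pow 2
      simpa using this
    have := tendsto_finset_sum (Finset.univ : Finset (Fin k)) (fun m _ => hterm m)
    simpa using this
  obtain ⟨X, hX⟩ := (htend.eventually (gt_mem_nhds hK)).exists
  refine ⟨fun i => X + ((i : ℕ) : ℝ), ?_, ?_⟩
  · intro i j h
    simp only [add_right_inj, Nat.cast_inj] at h
    exact Fin.ext h
  · intro hPSD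
    have h0 := hPSD.dotProduct_mulVec_nonneg c
    have hstar : star c = c := by
      funext i; simp
    rw [hstar, hquad (fun i => X + ((i : ℕ) : ℝ))] at h0
    have hA : ∀ m : Fin k,
        (∑ i : Fin (k+1), c i * Real.exp (a m * (X + ((i : ℕ) : ℝ)))) = 0 := by
      intro m
      rw [hexpsum (a m) X, hroot m, mul_zero]
    have hB : ∀ m : Fin k,
        (∑ i : Fin (k+1), c i * Real.exp (-(a m) * (X + ((i : ℕ) : ℝ))))
          = Real.exp (-(a m) * X) * p.eval (Real.exp (-(a m))) :=
      fun m => hexpsum _ X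
    simp only [hA, hB, hsumc] at h0
    simp only [ne_eq, OfNat.ofNat_ne_zero, not_false_eq_true, zero_pow,
      Finset.sum_const_zero, zero_add] at h0
    linarith
end

section
/- Let S ⊂ ℤ_{≥0}^n be finite, let T2 = ℤ_{≥0}^n ∩ (½ conv(S)) and T1 = ℤ_{≥0}^n ∩ conv(S). If a polynomial p supported on S is a sum of squares of real polynomials, then p is a sum of at most |T1| squares of polynomials supported on T2. -/
open MvPolynomial Pointwise

namespace SosAux

variable {n : ℕ}

/-- embedding of exponent vectors into `ℝⁿ` -/
noncomputable def phi (t : Fin n →₀ ℕ) : Fin n → ℝ := fun i => (t i : ℝ)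

lemma phi_inj : Function.Injective (phi (n := n)) := by
  intro a b h
  ext i
  have := congrFun h i
  simp only [phi] at this
  exact_mod_cast this

lemma phi_add (a b : Fin n →₀ ℕ) : phi (a + b) = phi a + phi b := by
  funext i; simp [phi]

lemma half_add_half {C : Set (Fin n → ℝ)} (hC : Convex ℝ C) {x y : Fin n → ℝ}
    (hx : x ∈ (2:ℝ)⁻¹ • C) (hy : y ∈ (2:ℝ)⁻¹ • C) : x + y ∈ C := by
  obtain ⟨a, ha, rfl⟩ := hx
  obtain ⟨b, hb, rfl⟩ := hy
  have := hC ha hb (by norm_num : (0:ℝ) ≤ 2⁻¹) (by norm_num : (0:ℝ) ≤ 2⁻¹)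
    (by norm_num : (2:ℝ)⁻¹ + 2⁻¹ = 1)
  exact this

lemma mem_half {C : Set (Fin n → ℝ)} {x : Fin n → ℝ} (hx : x + x ∈ C) :
    x ∈ (2:ℝ)⁻¹ • C := by
  refine ⟨x + x, hx, ?_⟩
  funext i
  simp only [Pi.smul_apply, Pi.add_apply, smul_eq_mul]
  ring

/-- Newton polytope containment for SOS summands. -/
lemma newton (S : Finset (Fin n →₀ ℕ)) (p : MvPolynomial (Fin n) ℝ)
    (hsupp : (p.support : Set (Fin n →₀ ℕ)) ⊆ (S : Set (Fin n →₀ ℕ)))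
    (m : ℕ) (g : Fin m → MvPolynomial (Fin n) ℝ)
    (hp : p = ∑ i, g i ^ 2) :
    ∀ i, ∀ t ∈ (g i).support, phi t ∈ (2:ℝ)⁻¹ • convexHull ℝ (phi '' S) := by
  classical
  set C : Set (Fin n → ℝ) := convexHull ℝ (phi '' S) with hC
  set U : Finset (Fin n →₀ ℕ) := Finset.univ.biUnion (fun i => (g i).support) with hUdef
  suffices hU : ∀ t ∈ U, phi t ∈ (2:ℝ)⁻¹ • C by
    intro i t ht
    exact hU t (Finset.mem_biUnion.mpr ⟨i, Finset.mem_univ i, ht⟩)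
  set U' : Set (Fin n → ℝ) := phi '' (U : Set (Fin n →₀ ℕ)) with hU'def
  set K : Set (Fin n → ℝ) := convexHull ℝ U' with hK
  have hU'fin : U'.Finite := (U.finite_toSet).image _
  have hext : K.extremePoints ℝ ⊆ (2:ℝ)⁻¹ • C := by
    intro α hα
    have hαU' : α ∈ U' := extremePoints_convexHull_subset hα
    obtain ⟨t₀, ht₀U, rfl⟩ := hαU'
    -- key coefficient computation
    have hcoeff : ∀ i : Fin m, coeff (t₀ + t₀) (g i ^ 2) = (coeff t₀ (g i))^2 := by
      intro i
      rw [sq, coeff_mul]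
      rw [Finset.sum_eq_single (t₀, t₀)]
      · exact (sq _).symm
      · rintro ⟨a, b⟩ hab hne
        rw [Finset.HasAntidiagonal.mem_antidiagonal] at hab
        by_contra h
        have ha : a ∈ (g i).support := by
          rw [mem_support_iff]; intro h'; apply h; simp [h']
        have hb : b ∈ (g i).support := by
          rw [mem_support_iff]; intro h'; apply h; simp [h']
        have haU : phi a ∈ K := subset_convexHull ℝ _
          ⟨a, Finset.mem_coe.mpr (Finset.mem_biUnion.mpr ⟨i, Finset.mem_univ i, ha⟩), rfl⟩
        have hbU : phi b ∈ K := subset_convexHull ℝ _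
          ⟨b, Finset.mem_coe.mpr (Finset.mem_biUnion.mpr ⟨i, Finset.mem_univ i, hb⟩), rfl⟩
        have hsum : phi a + phi b = phi t₀ + phi t₀ := by
          rw [← phi_add, ← phi_add, hab]
        have hab' : phi a = phi t₀ ∧ phi b = phi t₀ := by
          by_cases hxy : phi a = phi b
          · constructor
            · have : phi a + phi a = phi t₀ + phi t₀ := by rw [hxy] at hsum ⊢; exact hsum
              have h2 : (2:ℝ) • phi a = (2:ℝ) • phi t₀ := by
                rw [two_smul, two_smul]; exact this
              exact smul_right_injective _ (by norm_num : (2:ℝ) ≠ 0) h2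
            · have h1 : phi a = phi t₀ := by
                have : phi a + phi a = phi t₀ + phi t₀ := by rw [hxy] at hsum ⊢; exact hsum
                have h2 : (2:ℝ) • phi a = (2:ℝ) • phi t₀ := by
                  rw [two_smul, two_smul]; exact this
                exact smul_right_injective _ (by norm_num : (2:ℝ) ≠ 0) h2
              rw [← hxy]; exact h1
          · have hmid : phi t₀ ∈ openSegment ℝ (phi a) (phi b) := by
              refine ⟨1/2, 1/2, by norm_num, by norm_num, by norm_num, ?_⟩
              funext j
              have := congrFun hsum j
              simp only [Pi.add_apply] at this
              simp only [Pi.add_apply, Pi.smul_apply, smul_eq_mul]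
              linarith
            exact ⟨hα.2 haU hbU hmid, hα.2 hbU haU (by rw [openSegment_symm]; exact hmid)⟩
        apply hne
        have h1 : a = t₀ := phi_inj hab'.1
        have h2 : b = t₀ := phi_inj hab'.2
        rw [h1, h2]
      · intro hni
        exfalso
        exact hni (Finset.HasAntidiagonal.mem_antidiagonal.mpr rfl)
    -- t₀ belongs to some support
    obtain ⟨i₀, -, hi₀⟩ := Finset.mem_biUnion.mp ht₀U
    have hpc : coeff (t₀ + t₀) p = ∑ i, (coeff t₀ (g i))^2 := by
      rw [hp]
      rw [coeff_sum]
      exact Finset.sum_congr rfl fun i _ => hcoeff i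
    have hpos : coeff (t₀ + t₀) p ≠ 0 := by
      rw [hpc]
      intro h0
      have := (Finset.sum_eq_zero_iff_of_nonneg (fun i _ => sq_nonneg _)).mp h0 i₀
        (Finset.mem_univ i₀)
      exact (mem_support_iff.mp hi₀) (by
        have := sq_eq_zero_iff.mp this
        exact this)
    have hmemS : t₀ + t₀ ∈ S := hsupp (by simpa [mem_support_iff] using hpos)
    have : phi (t₀ + t₀) ∈ C := subset_convexHull ℝ _ ⟨t₀ + t₀, hmemS, rfl⟩
    rw [phi_add] at this
    exact mem_half this
  -- conclude via Krein-Milman for polytopes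
  have hKcomp : IsCompact K := hU'fin.isCompact_convexHull ℝ
  have hKconv : Convex ℝ K := convex_convexHull ℝ _
  have hextfin : (K.extremePoints ℝ).Finite :=
    hU'fin.subset extremePoints_convexHull_subset
  have hKM : closure (convexHull ℝ (K.extremePoints ℝ)) = K :=
    closure_convexHull_extremePoints hKcomp hKconv
  have hKclosed : IsClosed (convexHull ℝ (K.extremePoints ℝ)) := hextfin.isClosed_convexHull ℝ
  have hKeq : convexHull ℝ (K.extremePoints ℝ) = K := by
    rw [← hKclosed.closure_eq]
    exact hKM
  have hhalfconv : Convex ℝ ((2:ℝ)⁻¹ • C) := (convex_convexHull ℝ _).smul _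
  have hKsub : K ⊆ (2:ℝ)⁻¹ • C := by
    rw [← hKeq]
    exact convexHull_min hext hhalfconv
  intro t ht
  exact hKsub (subset_convexHull ℝ _ ⟨t, Finset.mem_coe.mpr ht, rfl⟩)

/-- the set of lattice points in the convex hull of `phi '' S` is finite -/
lemma T1_finite (S : Finset (Fin n →₀ ℕ)) :
    {t : Fin n →₀ ℕ | phi t ∈ convexHull ℝ (phi '' (S : Set (Fin n →₀ ℕ)))}.Finite := by
  classical
  set B : ℕ := S.sup (fun s => Finset.univ.sup fun i => s i) with hB
  have hD : convexHull ℝ (phi '' (S : Set (Fin n →₀ ℕ))) ⊆ {x | ∀ i, x i ≤ (B:ℝ)} := by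
    apply convexHull_min
    · rintro x ⟨s, hs, rfl⟩ i
      have h1 : s i ≤ B := by
        calc s i ≤ Finset.univ.sup (fun i => s i) := Finset.le_sup (Finset.mem_univ i)
        _ ≤ B := Finset.le_sup (f := fun s => Finset.univ.sup fun i => s i) hs
      simp only [phi]
      exact_mod_cast h1
    · intro x hx y hy a b ha hb hab i
      have hxi := hx i
      have hyi := hy i
      simp only [Pi.add_apply, Pi.smul_apply, smul_eq_mul]
      nlinarith
  have hsub : {t : Fin n →₀ ℕ | phi t ∈ convexHull ℝ (phi '' (S : Set (Fin n →₀ ℕ)))} ⊆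
      {t : Fin n →₀ ℕ | ∀ i, t i ≤ B} := by
    intro t ht i
    have := hD ht i
    simp only [phi] at this
    exact_mod_cast this
  apply Set.Finite.subset _ hsub
  have hinj : Set.InjOn (fun (t : Fin n →₀ ℕ) (i : Fin n) => t i)
      {t : Fin n →₀ ℕ | ∀ i, t i ≤ B} := by
    intro a _ b _ h
    ext i
    exact congrFun h i
  apply Set.Finite.of_finite_image _ hinj
  apply Set.Finite.subset (Set.Finite.pi (fun _ : Fin n => Set.finite_Iic B))
  rintro f ⟨t, ht, rfl⟩
  intro i _
  exact ht i

lemma mem_span_monomials (s : Finset (Fin n →₀ ℕ)) (q : MvPolynomial (Fin n) ℝ)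
    (h : q.support ⊆ s) :
    q ∈ Submodule.span ℝ ((s.image fun t => (monomial t (1:ℝ))) : Set (MvPolynomial (Fin n) ℝ)) := by
  rw [← q.support_sum_monomial_coeff]
  apply Submodule.sum_mem
  intro v hv
  have heq : monomial v (coeff v q) = (coeff v q) • monomial v (1:ℝ) := by
    rw [smul_monomial, smul_eq_mul, mul_one]
  rw [heq]
  exact Submodule.smul_mem _ _ (Submodule.subset_span (by
    simp only [Finset.coe_image, Set.mem_image, Finset.mem_coe]
    exact ⟨v, h hv, rfl⟩))

/-- Carathéodory-type reduction for sums of squares. -/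
lemma caratheodory (W : Submodule ℝ (MvPolynomial (Fin n) ℝ)) [FiniteDimensional ℝ W]
    (N : ℕ) (hrank : Module.finrank ℝ W ≤ N)
    (P : MvPolynomial (Fin n) ℝ → Prop)
    (hP0 : P 0) (hPsmul : ∀ (c : ℝ) q, P q → P (c • q)) (hPW : ∀ q, P q → q^2 ∈ W) :
    ∀ (m : ℕ) (q : Fin m → MvPolynomial (Fin n) ℝ), (∀ i, P (q i)) →
      ∀ p, p = ∑ i, q i ^ 2 →
      ∃ g : Fin N → MvPolynomial (Fin n) ℝ, (∀ i, P (g i)) ∧ p = ∑ i, g i ^ 2 := by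
  intro m
  induction m with
  | zero =>
    intro q hq p hp
    refine ⟨fun _ => 0, fun _ => hP0, ?_⟩
    simpa using hp
  | succ m ih =>
    intro q hq p hp
    by_cases hm : m + 1 ≤ N
    · -- pad with zeros
      set F : ℕ → MvPolynomial (Fin n) ℝ := fun k => if h : k < m + 1 then q ⟨k, h⟩ else 0
        with hF
      refine ⟨fun i => F i, ?_, ?_⟩
      · intro i
        by_cases h : (i : ℕ) < m + 1
        · simpa [hF, show (i:ℕ) ≤ m by omega] using hq ⟨i, h⟩
        · simpa [hF, show ¬ (i:ℕ) ≤ m by omega] using hP0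
      · rw [hp]
        rw [Fin.sum_univ_eq_sum_range (fun k => (F k)^2) N]
        rw [← Finset.sum_subset (f := fun k => (F k)^2) (Finset.range_subset_range.mpr hm)
          (fun x _ hx => by
            have : ¬ x < m + 1 := by simp at hx; omega
            simp [hF, show ¬ x ≤ m by omega])]
        rw [← Fin.sum_univ_eq_sum_range (fun k => (F k)^2) (m+1)]
        apply Finset.sum_congr rfl
        intro i _
        simp [hF, i.isLt, show ¬ m < (i:ℕ) by omega]
    · -- linear dependence
      push_neg at hm
      have hdep : ¬ LinearIndependent ℝ
          (fun i : Fin (m+1) => (⟨q i ^ 2, hPW _ (hq i)⟩ : W)) := by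
        intro hli
        have := hli.fintype_card_le_finrank
        simp only [Fintype.card_fin] at this
        omega
      obtain ⟨c, hc0, i₀, hi₀⟩ := Fintype.not_linearIndependent_iff.mp hdep
      have hrel0 : ∑ i, c i • (q i ^ 2) = 0 := by
        have := congrArg (Subtype.val) hc0
        simpa using this
      have hex : ∃ c : Fin (m+1) → ℝ, (∑ i, c i • q i ^ 2 = 0) ∧ ∃ i, 0 < c i := by
        rcases lt_trichotomy (c i₀) 0 with h | h | h
        · refine ⟨-c, ?_, i₀, by simpa using h⟩
          simp only [Pi.neg_apply, neg_smul]
          rw [Finset.sum_neg_distrib, hrel0, neg_zero]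
        · exact absurd h hi₀
        · exact ⟨c, hrel0, i₀, h⟩
      clear hrel0 hi₀ hc0 hdep
      obtain ⟨c, hrel, i₁, hi₁⟩ := hex
      obtain ⟨j, -, hj⟩ := Finset.exists_max_image Finset.univ c ⟨i₁, Finset.mem_univ i₁⟩
      have hcj : 0 < c j := lt_of_lt_of_le hi₁ (hj i₁ (Finset.mem_univ i₁))
      set lam : Fin (m+1) → ℝ := fun i => 1 - c i / c j with hlam
      have hlam0 : ∀ i, 0 ≤ lam i := by
        intro i
        have := hj i (Finset.mem_univ i)
        have hdiv : c i / c j ≤ 1 := (div_le_one hcj).mpr this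
        simp only [hlam]
        linarith
      have hlamj : lam j = 0 := by
        simp only [hlam, div_self hcj.ne', sub_self]
      set r : Fin (m+1) → MvPolynomial (Fin n) ℝ := fun i => (Real.sqrt (lam i)) • q i with hr
      have hr2 : ∀ i, r i ^ 2 = lam i • q i ^ 2 := by
        intro i
        rw [hr, smul_pow, Real.sq_sqrt (hlam0 i)]
      have hsum : ∑ i, r i ^ 2 = p := by
        have step : ∀ i : Fin (m+1), r i ^ 2 = q i ^ 2 - (c j)⁻¹ • (c i • q i ^ 2) := by
          intro i
          rw [hr2 i, hlam, sub_smul, one_smul, smul_smul]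
          congr 2
          field_simp
        rw [Finset.sum_congr rfl (fun i _ => step i), Finset.sum_sub_distrib, ← hp,
          ← Finset.smul_sum, hrel, smul_zero, sub_zero]
      have hpm : p = ∑ i : Fin m, (r (j.succAbove i)) ^ 2 := by
        rw [← hsum, Fin.sum_univ_succAbove (fun i => r i ^ 2) j]
        have hrj : r j = 0 := by
          rw [hr]
          simp [hlamj]
        simp [hrj]
      exact ih (fun i => r (j.succAbove i)) (fun i => hPsmul _ _ (hq _)) p hpm

end SosAux

open SosAux

/-- Let `S ⊂ ℤ_{≥0}^n` be finite, `T₁ = ℤ_{≥0}^n ∩ conv(S)`, and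
`T₂ = ℤ_{≥0}^n ∩ (½ conv(S))`.  If a polynomial `p` supported on `S` is a sum of squares
of real polynomials, then `p` is a sum of at most `|T₁|` squares of polynomials
supported on `T₂`. -/
theorem sos_supported_caratheodory (n : ℕ) (S : Finset (Fin n →₀ ℕ))
    (p : MvPolynomial (Fin n) ℝ)
    (hsupp : (p.support : Set (Fin n →₀ ℕ)) ⊆ (S : Set (Fin n →₀ ℕ)))
    (hsos : ∃ (m : ℕ) (g : Fin m → MvPolynomial (Fin n) ℝ), p = ∑ i, g i ^ 2) :
    ∃ g : Fin ({t : Fin n →₀ ℕ |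
          (fun i => (t i : ℝ)) ∈
            convexHull ℝ ((fun s : Fin n →₀ ℕ => fun i => (s i : ℝ)) '' S)}.ncard)
        → MvPolynomial (Fin n) ℝ,
      (∀ i, ∀ t ∈ (g i).support,
        (fun j => (t j : ℝ)) ∈
          (2 : ℝ)⁻¹ • convexHull ℝ ((fun s : Fin n →₀ ℕ => fun i => (s i : ℝ)) '' S)) ∧
      p = ∑ i, g i ^ 2 := by
  classical
  obtain ⟨m, g, hp⟩ := hsos
  set C : Set (Fin n → ℝ) := convexHull ℝ (phi '' (S : Set (Fin n →₀ ℕ))) with hC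
  have hfin : {t : Fin n →₀ ℕ | phi t ∈ C}.Finite := T1_finite S
  set T1F : Finset (Fin n →₀ ℕ) := hfin.toFinset with hT1F
  set N : ℕ := {t : Fin n →₀ ℕ | phi t ∈ C}.ncard with hN
  have hNcard : T1F.card = N := by
    rw [hN, Set.ncard_eq_toFinset_card _ hfin]
  set W : Submodule ℝ (MvPolynomial (Fin n) ℝ) :=
    Submodule.span ℝ ((T1F.image fun t => (monomial t (1:ℝ))) : Set (MvPolynomial (Fin n) ℝ))
    with hW
  have : FiniteDimensional ℝ W := FiniteDimensional.span_of_finite ℝ (Finset.finite_toSet _)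
  have hrank : Module.finrank ℝ W ≤ N := by
    calc Module.finrank ℝ W ≤ (T1F.image fun t => (monomial t (1:ℝ))).card :=
          finrank_span_finset_le_card _
    _ ≤ T1F.card := Finset.card_image_le
    _ = N := hNcard
  set P : MvPolynomial (Fin n) ℝ → Prop :=
    fun q => ∀ t ∈ q.support, phi t ∈ (2:ℝ)⁻¹ • C with hP
  have hP0 : P 0 := by intro t ht; simp at ht
  have hPsmul : ∀ (c : ℝ) q, P q → P (c • q) := by
    intro c q hq t ht
    exact hq t (MvPolynomial.support_smul ht)
  have hPW : ∀ q, P q → q ^ 2 ∈ W := by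
    intro q hq
    apply mem_span_monomials
    intro u hu
    rw [sq] at hu
    have := MvPolynomial.support_mul q q hu
    rw [Finset.mem_add] at this
    obtain ⟨a, ha, b, hb, rfl⟩ := this
    have : phi (a + b) ∈ C := by
      rw [phi_add]
      exact half_add_half (convex_convexHull ℝ _) (hq a ha) (hq b hb)
    rw [hT1F]
    exact (Set.Finite.mem_toFinset hfin).mpr this
  have hqP : ∀ i, P (g i) := by
    intro i t ht
    exact newton S p hsupp m g hp i t ht
  obtain ⟨g', hg'P, hg'sum⟩ := caratheodory W N hrank P hP0 hPsmul hPW m g hqP p hp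
  exact ⟨g', hg'P, hg'sum⟩
end
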